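/- arXiv:2008.09498 — 4 statements merged into one kernel-verified Lean document; each statement's English description precedes it below -/
import Mathlib

section
/- Let X = (X₁, X₂, X_J) be a random vector where X₁, X₂ are real-valued and X_J takes values in ℝ^{d−2}. If the subsets A_{1,J}, …, A_{m,J} are pairwise disjoint, then the covariance matrix Δ with entries Δ_{k,l} = 64·[ I_{k,l}/(p_k p_l) + D_k D_l p_{k,l}/(p_k³ p_l³) − D_l J_{k,l}/(p_k p_l³) − D_k J_{l,k}/(p_l p_k³) ] is diagonal, with k-th diagonal entry Δ_k = 16·( 4 I_{k,k}/p_k² − (1 + τ_{1,2|X_J∈A_{k,J}})²/(4 p_k) ), provided the conditional distributions of X₁ and of X₂ given X_J ∈ A_{k,J} are continuous for every k. -/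
/- Common framework: conditional Kendall's tau given discretized conditioning events.

An observation is a pair `(x_I, x_J) : (Fin p → ℝ) × (Fin dJ → ℝ)`, where `x_I` is the
conditioned vector and `x_J` the conditioning vector. -/

open MeasureTheory ProbabilityTheory Filter Finset
open scoped Topology Classical

noncomputable section

/-- The space of one observation `X = (X_I, X_J)`. -/
abbrev RVec (p dJ : ℕ) : Type := (Fin p → ℝ) × (Fin dJ → ℝ)

namespace CondKT

variable {p dJ : ℕ}

/-- The symmetrized concordance kernel `π_{a,b}(x,y)`. -/
def kerPi (a b : Fin p) (x y : RVec p dJ) : ℝ :=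
  ((if x.1 a < y.1 a ∧ x.1 b < y.1 b then (1 : ℝ) else 0) +
    (if y.1 a < x.1 a ∧ y.1 b < x.1 b then (1 : ℝ) else 0)) / 2

/-- `p_k = P(X_J ∈ A)`, where `ν` is the law of `X`. -/
def pA (ν : Measure (RVec p dJ)) (A : Set (Fin dJ → ℝ)) : ℝ :=
  (ν {x | x.2 ∈ A}).toReal

/-- `D_{a,b,k} = P(X_{1,a} < X_{2,a}, X_{1,b} < X_{2,b}, X_{1,J} ∈ A, X_{2,J} ∈ A)`
for two independent copies `X_1, X_2` with law `ν`. -/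
def Dab (ν : Measure (RVec p dJ)) (a b : Fin p) (A : Set (Fin dJ → ℝ)) : ℝ :=
  ((ν.prod ν) {q | q.1.1 a < q.2.1 a ∧ q.1.1 b < q.2.1 b ∧ q.1.2 ∈ A ∧ q.2.2 ∈ A}).toReal

/-- `P_k`: the conditional law of `X` given `X_J ∈ A`. -/
def PA (ν : Measure (RVec p dJ)) (A : Set (Fin dJ → ℝ)) : Measure (RVec p dJ) :=
  ν[|{x | x.2 ∈ A}]

/-- `I_{a,b,a',b',k,l} = ∫ 1{z_J ∈ A_k ∩ A_l} π_{a,b}(x,z) π_{a',b'}(y,z) P_k(dx) P_l(dy) P(dz)`. -/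
def Iq (ν : Measure (RVec p dJ)) (a b a' b' : Fin p) (Ak Al : Set (Fin dJ → ℝ)) : ℝ :=
  ∫ x, ∫ y, ∫ z, (if z.2 ∈ Ak ∩ Al then (1 : ℝ) else 0) * kerPi a b x z * kerPi a' b' y z
    ∂ν ∂(PA ν Al) ∂(PA ν Ak)

/-- `J_{a,b,k,l} = ∫ 1{y_J ∈ A_k ∩ A_l} π_{a,b}(x,y) P_k(dx) P(dy)`. -/
def Jq (ν : Measure (RVec p dJ)) (a b : Fin p) (Ak Al : Set (Fin dJ → ℝ)) : ℝ :=
  ∫ x, ∫ y, (if y.2 ∈ Ak ∩ Al then (1 : ℝ) else 0) * kerPi a b x y ∂ν ∂(PA ν Ak)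

/-- `p_{k,l} = P(X_J ∈ A_k ∩ A_l)`. -/
def pAA (ν : Measure (RVec p dJ)) (Ak Al : Set (Fin dJ → ℝ)) : ℝ :=
  (ν {x | x.2 ∈ Ak ∧ x.2 ∈ Al}).toReal

/-- The conditional Kendall's tau `τ_{a,b | X_J ∈ A}`:
`P((X_{1,a}-X_{2,a})(X_{1,b}-X_{2,b}) > 0 | X_{1,J} ∈ A, X_{2,J} ∈ A)
  - P((X_{1,a}-X_{2,a})(X_{1,b}-X_{2,b}) < 0 | X_{1,J} ∈ A, X_{2,J} ∈ A)`. -/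
def condTau (ν : Measure (RVec p dJ)) (a b : Fin p) (A : Set (Fin dJ → ℝ)) : ℝ :=
  (((ν.prod ν)[|{q : RVec p dJ × RVec p dJ | q.1.2 ∈ A ∧ q.2.2 ∈ A}])
      {q : RVec p dJ × RVec p dJ | 0 < (q.1.1 a - q.2.1 a) * (q.1.1 b - q.2.1 b)}).toReal -
    (((ν.prod ν)[|{q : RVec p dJ × RVec p dJ | q.1.2 ∈ A ∧ q.2.2 ∈ A}])
      {q : RVec p dJ × RVec p dJ | (q.1.1 a - q.2.1 a) * (q.1.1 b - q.2.1 b) < 0}).toReal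

/-- The conditional distribution of the coordinate `X_a` given `X_J ∈ A` is continuous
(i.e. has no atoms). -/
def CondMarginContinuous (ν : Measure (RVec p dJ)) (a : Fin p) (A : Set (Fin dJ → ℝ)) : Prop :=
  ∀ t : ℝ, PA ν A {x | x.1 a = t} = 0

variable {Ω : Type*} [MeasurableSpace Ω]

/-- `N_{k,n}`: the number of sample points (among `X 0, …, X (n-1)`) falling in the
conditioning event `A`. -/
def NA (X : ℕ → Ω → RVec p dJ) (A : Set (Fin dJ → ℝ)) (n : ℕ) (ω : Ω) : ℝ :=
  ∑ i ∈ Finset.range n, if (X i ω).2 ∈ A then (1 : ℝ) else 0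

/-- The weights `w^{(k)}_{i,n} = 1{X_{i,J} ∈ A} / N_{k,n}`. -/
def wA (X : ℕ → Ω → RVec p dJ) (A : Set (Fin dJ → ℝ)) (n i : ℕ) (ω : Ω) : ℝ :=
  (if (X i ω).2 ∈ A then (1 : ℝ) else 0) / NA X A n ω

/-- `s^{(k)}_n = Σ_i (w^{(k)}_{i,n})²`. -/
def sA (X : ℕ → Ω → RVec p dJ) (A : Set (Fin dJ → ℝ)) (n : ℕ) (ω : Ω) : ℝ :=
  ∑ i ∈ Finset.range n, (wA X A n i ω) ^ 2

/-- The estimator `τ̂^{(1)}`. -/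
def tauHat1 (X : ℕ → Ω → RVec p dJ) (a b : Fin p) (A : Set (Fin dJ → ℝ)) (n : ℕ) (ω : Ω) : ℝ :=
  4 * ∑ i ∈ Finset.range n, ∑ j ∈ Finset.range n, wA X A n i ω * wA X A n j ω *
      (if (X i ω).1 a < (X j ω).1 a ∧ (X i ω).1 b < (X j ω).1 b then (1 : ℝ) else 0) - 1

/-- The estimator `τ̂^{(2)}`. -/
def tauHat2 (X : ℕ → Ω → RVec p dJ) (a b : Fin p) (A : Set (Fin dJ → ℝ)) (n : ℕ) (ω : Ω) : ℝ :=
  ∑ i ∈ Finset.range n, ∑ j ∈ Finset.range n, wA X A n i ω * wA X A n j ω *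
      ((if 0 < ((X i ω).1 a - (X j ω).1 a) * ((X i ω).1 b - (X j ω).1 b) then (1 : ℝ) else 0) -
        (if ((X i ω).1 a - (X j ω).1 a) * ((X i ω).1 b - (X j ω).1 b) < 0 then (1 : ℝ) else 0))

/-- The estimator `τ̂^{(3)}`. -/
def tauHat3 (X : ℕ → Ω → RVec p dJ) (a b : Fin p) (A : Set (Fin dJ → ℝ)) (n : ℕ) (ω : Ω) : ℝ :=
  1 - 4 * ∑ i ∈ Finset.range n, ∑ j ∈ Finset.range n, wA X A n i ω * wA X A n j ω *
      (if (X i ω).1 a < (X j ω).1 a ∧ (X j ω).1 b < (X i ω).1 b then (1 : ℝ) else 0)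

/-- The rescaled estimator `τ̂ = τ̂^{(2)} / (1 - s^{(k)}_n)` of the conditional Kendall's tau. -/
def tauHat (X : ℕ → Ω → RVec p dJ) (a b : Fin p) (A : Set (Fin dJ → ℝ)) (n : ℕ) (ω : Ω) : ℝ :=
  tauHat2 X a b A n ω / (1 - sA X A n ω)

/-- The U-statistic `D̂_{a,b,k}`. -/
def DHat (X : ℕ → Ω → RVec p dJ) (a b : Fin p) (A : Set (Fin dJ → ℝ)) (n : ℕ) (ω : Ω) : ℝ :=
  (∑ i ∈ Finset.range n, ∑ j ∈ Finset.range n,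
      if i ≠ j ∧ (X i ω).1 a < (X j ω).1 a ∧ (X i ω).1 b < (X j ω).1 b ∧
          (X i ω).2 ∈ A ∧ (X j ω).2 ∈ A then (1 : ℝ) else 0) /
    ((n : ℝ) * ((n : ℝ) - 1))

/-- The empirical probability `p̂_k`. -/
def pHat (X : ℕ → Ω → RVec p dJ) (A : Set (Fin dJ → ℝ)) (n : ℕ) (ω : Ω) : ℝ :=
  (∑ i ∈ Finset.range n, if (X i ω).2 ∈ A then (1 : ℝ) else 0) / n

/-- `μ` is the centered Gaussian distribution on `ι → ℝ` with covariance matrix `S`,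
characterized through its one-dimensional projections (Cramér–Wold). -/
def IsCenteredGaussianLaw {ι : Type*} [Fintype ι] (μ : Measure (ι → ℝ))
    (S : Matrix ι ι ℝ) : Prop :=
  IsProbabilityMeasure μ ∧
    ∀ a : ι → ℝ, μ.map (fun x => ∑ i, a i * x i) =
      gaussianReal 0 (∑ i, ∑ j, a i * S i j * a j).toNNReal

/-- Convergence in distribution of the random elements `Z n` towards the law `μ`. -/
def TendstoInDistrib {E : Type*} [MeasurableSpace E] [TopologicalSpace E]
    (P : Measure Ω) (Z : ℕ → Ω → E) (μ : Measure E) : Prop :=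
  ∀ f : BoundedContinuousFunction E ℝ,
    Tendsto (fun n => ∫ ω, f (Z n ω) ∂P) atTop (𝓝 (∫ x, f x ∂μ))

/-- The chi-squared distribution with `k` degrees of freedom. -/
def chiSquared (k : ℝ) : Measure ℝ := gammaMeasure (k / 2) (1 / 2)

/-- The `(m-1) × m` contrast matrix `T = [1_{m-1} : -I_{m-1}]`. -/
def contrastT (m : ℕ) : Matrix (Fin (m - 1)) (Fin m) ℝ := fun i j =>
  if (j : ℕ) = 0 then 1 else if (j : ℕ) = (i : ℕ) + 1 then -1 else 0

/-- The index set of pairs `(a,b)` with `a < b` in `Fin p`. -/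
abbrev PairIdx (p : ℕ) : Type := {q : Fin p × Fin p // q.1 < q.2}

end CondKT

open CondKT


namespace StmtAux
open CondKT
variable {dJ : ℕ}


-- measurability helpers
lemma m10 : Measurable fun q : RVec 2 dJ × RVec 2 dJ => q.1.1 0 :=
  (measurable_pi_apply _).comp (measurable_fst.comp measurable_fst)
lemma m11 : Measurable fun q : RVec 2 dJ × RVec 2 dJ => q.1.1 1 :=
  (measurable_pi_apply _).comp (measurable_fst.comp measurable_fst)
lemma m20 : Measurable fun q : RVec 2 dJ × RVec 2 dJ => q.2.1 0 :=
  (measurable_pi_apply _).comp (measurable_fst.comp measurable_snd)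
lemma m21 : Measurable fun q : RVec 2 dJ × RVec 2 dJ => q.2.1 1 :=
  (measurable_pi_apply _).comp (measurable_fst.comp measurable_snd)

lemma hC1meas (A : Set (Fin dJ → ℝ)) (hA : MeasurableSet A) :
    MeasurableSet {q : RVec 2 dJ × RVec 2 dJ |
      q.1.1 0 < q.2.1 0 ∧ q.1.1 1 < q.2.1 1 ∧ q.1.2 ∈ A ∧ q.2.2 ∈ A} := by
  refine (measurableSet_lt m10 m20).inter ((measurableSet_lt m11 m21).inter
    ((hA.preimage (measurable_snd.comp measurable_fst)).inter
     (hA.preimage (measurable_snd.comp measurable_snd))))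

variable (ν : Measure (RVec 2 dJ)) [IsProbabilityMeasure ν]

lemma hC2meas (A : Set (Fin dJ → ℝ)) (hA : MeasurableSet A) :
    MeasurableSet {q : RVec 2 dJ × RVec 2 dJ |
      q.2.1 0 < q.1.1 0 ∧ q.2.1 1 < q.1.1 1 ∧ q.1.2 ∈ A ∧ q.2.2 ∈ A} :=
  (measurableSet_lt m20 m10).inter ((measurableSet_lt m21 m11).inter
    ((hA.preimage (measurable_snd.comp measurable_fst)).inter
     (hA.preimage (measurable_snd.comp measurable_snd))))

lemma swap_meas (A : Set (Fin dJ → ℝ)) (hA : MeasurableSet A) :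
    (ν.prod ν) {q : RVec 2 dJ × RVec 2 dJ |
      q.2.1 0 < q.1.1 0 ∧ q.2.1 1 < q.1.1 1 ∧ q.1.2 ∈ A ∧ q.2.2 ∈ A} =
    (ν.prod ν) {q : RVec 2 dJ × RVec 2 dJ |
      q.1.1 0 < q.2.1 0 ∧ q.1.1 1 < q.2.1 1 ∧ q.1.2 ∈ A ∧ q.2.2 ∈ A} := by
  have h : {q : RVec 2 dJ × RVec 2 dJ |
      q.2.1 0 < q.1.1 0 ∧ q.2.1 1 < q.1.1 1 ∧ q.1.2 ∈ A ∧ q.2.2 ∈ A} =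
      Prod.swap ⁻¹' {q : RVec 2 dJ × RVec 2 dJ |
      q.1.1 0 < q.2.1 0 ∧ q.1.1 1 < q.2.1 1 ∧ q.1.2 ∈ A ∧ q.2.2 ∈ A} := by
    ext q; simp [Prod.swap]; tauto
  rw [h, ← Measure.map_apply measurable_swap (hC1meas A hA), Measure.prod_swap]

lemma tie0 (a : Fin 2) (A : Set (Fin dJ → ℝ)) (hA : MeasurableSet A)
    (hc : ∀ t : ℝ, (ν[|{x : RVec 2 dJ | x.2 ∈ A}]) {x | x.1 a = t} = 0) (t : ℝ) :
    ν ({x : RVec 2 dJ | x.2 ∈ A} ∩ {x | x.1 a = t}) = 0 := by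
  have h := hc t
  have hS : MeasurableSet {x : RVec 2 dJ | x.2 ∈ A} := hA.preimage measurable_snd
  rw [cond_apply hS] at h
  rcases mul_eq_zero.1 h with h' | h'
  · exact absurd h' (ENNReal.inv_ne_zero.mpr (measure_ne_top ν _))
  · exact h'






-- inner integral computation
lemma inner_int (A : Set (Fin dJ → ℝ)) (hA : MeasurableSet A) (x : RVec 2 dJ) :
    ∫ y, (if y.2 ∈ A ∩ A then (1 : ℝ) else 0) * kerPi 0 1 x y ∂ν =
      ((ν {y : RVec 2 dJ | (x.1 0 < y.1 0 ∧ x.1 1 < y.1 1) ∧ y.2 ∈ A}).toReal +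
        (ν {y : RVec 2 dJ | (y.1 0 < x.1 0 ∧ y.1 1 < x.1 1) ∧ y.2 ∈ A}).toReal) / 2 := by
  have hE1 : MeasurableSet {y : RVec 2 dJ | (x.1 0 < y.1 0 ∧ x.1 1 < y.1 1) ∧ y.2 ∈ A} :=
    ((measurableSet_lt measurable_const ((measurable_pi_apply _).comp measurable_fst)).inter
      (measurableSet_lt measurable_const ((measurable_pi_apply _).comp measurable_fst))).inter
      (hA.preimage measurable_snd)
  have hE2 : MeasurableSet {y : RVec 2 dJ | (y.1 0 < x.1 0 ∧ y.1 1 < x.1 1) ∧ y.2 ∈ A} :=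
    ((measurableSet_lt ((measurable_pi_apply _).comp measurable_fst) measurable_const).inter
      (measurableSet_lt ((measurable_pi_apply _).comp measurable_fst) measurable_const)).inter
      (hA.preimage measurable_snd)
  have hfun : ∀ y : RVec 2 dJ, (if y.2 ∈ A ∩ A then (1 : ℝ) else 0) * kerPi 0 1 x y =
      (Set.indicator {y : RVec 2 dJ | (x.1 0 < y.1 0 ∧ x.1 1 < y.1 1) ∧ y.2 ∈ A} 1 y +
        Set.indicator {y : RVec 2 dJ | (y.1 0 < x.1 0 ∧ y.1 1 < x.1 1) ∧ y.2 ∈ A} 1 y) / 2 := by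
    intro y
    by_cases hy : y.2 ∈ A <;>
      by_cases h1 : x.1 0 < y.1 0 ∧ x.1 1 < y.1 1 <;>
      by_cases h2 : y.1 0 < x.1 0 ∧ y.1 1 < x.1 1 <;>
      simp [kerPi, Set.indicator_apply, hy, h1, h2] <;> norm_num
  simp only [hfun]
  have i1 : Integrable ({y : RVec 2 dJ | (x.1 0 < y.1 0 ∧ x.1 1 < y.1 1) ∧ y.2 ∈ A}.indicator
      (1 : RVec 2 dJ → ℝ)) ν := (integrable_indicator_iff hE1).2 (integrable_const (1:ℝ)).integrableOn
  have i2 : Integrable ({y : RVec 2 dJ | (y.1 0 < x.1 0 ∧ y.1 1 < x.1 1) ∧ y.2 ∈ A}.indicator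
      (1 : RVec 2 dJ → ℝ)) ν := (integrable_indicator_iff hE2).2 (integrable_const (1:ℝ)).integrableOn
  rw [integral_div, integral_add i1 i2,
    integral_indicator_one hE1, integral_indicator_one hE2]
  rfl

lemma out_int (A : Set (Fin dJ → ℝ)) (hA : MeasurableSet A)
    (F : Set (RVec 2 dJ × RVec 2 dJ)) (hF : MeasurableSet F) :
    ∫ x, (ν (Prod.mk x ⁻¹' F)).toReal ∂(PA ν A) =
      ((ν {x : RVec 2 dJ | x.2 ∈ A})⁻¹ *
        (ν.prod ν) (F ∩ ({x : RVec 2 dJ | x.2 ∈ A} ×ˢ Set.univ))).toReal := by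
  have hmeas : Measurable fun x : RVec 2 dJ => ν (Prod.mk x ⁻¹' F) :=
    measurable_measure_prodMk_left hF
  rw [integral_toReal hmeas.aemeasurable (ae_of_all _ fun x => measure_lt_top _ _)]
  congr 1
  have hPA : PA ν A = (ν {x : RVec 2 dJ | x.2 ∈ A})⁻¹ •
      ν.restrict {x : RVec 2 dJ | x.2 ∈ A} := rfl
  rw [hPA, lintegral_smul_measure]
  congr 1
  have hpr := Measure.prod_restrict (μ := ν) (ν := ν) {x : RVec 2 dJ | x.2 ∈ A} Set.univ
  rw [Measure.restrict_univ] at hpr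
  rw [← Measure.prod_apply hF (μ := ν.restrict {x : RVec 2 dJ | x.2 ∈ A}), hpr,
    Measure.restrict_apply hF]

lemma toReal_le_one (s : Set (RVec 2 dJ)) : (ν s).toReal ≤ 1 := by
  have h : ν s ≤ 1 := prob_le_one
  calc (ν s).toReal ≤ (1 : ENNReal).toReal := ENNReal.toReal_mono ENNReal.one_ne_top h
    _ = 1 := by simp

lemma Jq_eq (A : Set (Fin dJ → ℝ)) (hA : MeasurableSet A)
    (hp : ν {x : RVec 2 dJ | x.2 ∈ A} ≠ 0) :
    Jq ν 0 1 A A = Dab ν 0 1 A / pA ν A := by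
  have : IsProbabilityMeasure (PA ν A) := cond_isProbabilityMeasure hp
  set F1 : Set (RVec 2 dJ × RVec 2 dJ) :=
    {q | (q.1.1 0 < q.2.1 0 ∧ q.1.1 1 < q.2.1 1) ∧ q.2.2 ∈ A} with hF1def
  set F2 : Set (RVec 2 dJ × RVec 2 dJ) :=
    {q | (q.2.1 0 < q.1.1 0 ∧ q.2.1 1 < q.1.1 1) ∧ q.2.2 ∈ A} with hF2def
  have hF1 : MeasurableSet F1 :=
    ((measurableSet_lt m10 m20).inter (measurableSet_lt m11 m21)).inter
      (hA.preimage (measurable_snd.comp measurable_snd))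
  have hF2 : MeasurableSet F2 :=
    ((measurableSet_lt m20 m10).inter (measurableSet_lt m21 m11)).inter
      (hA.preimage (measurable_snd.comp measurable_snd))
  have key : ∀ (F : Set (RVec 2 dJ × RVec 2 dJ)), MeasurableSet F →
      Integrable (fun x => (ν (Prod.mk x ⁻¹' F)).toReal) (PA ν A) := by
    intro F hF
    refine (integrable_const (1:ℝ)).mono'
      ((measurable_measure_prodMk_left hF).ennreal_toReal.aestronglyMeasurable)
      (ae_of_all _ fun x => ?_)
    rw [Real.norm_eq_abs, abs_of_nonneg ENNReal.toReal_nonneg]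
    exact toReal_le_one ν _
  have hinteg : ∀ x : RVec 2 dJ,
      (∫ y, (if y.2 ∈ A ∩ A then (1 : ℝ) else 0) * kerPi 0 1 x y ∂ν) =
      ((ν (Prod.mk x ⁻¹' F1)).toReal + (ν (Prod.mk x ⁻¹' F2)).toReal) / 2 :=
    fun x => inner_int ν A hA x
  rw [Jq]
  simp only [hinteg]
  rw [integral_div, integral_add (key F1 hF1) (key F2 hF2), out_int ν A hA F1 hF1,
    out_int ν A hA F2 hF2]
  have e1 : F1 ∩ ({x : RVec 2 dJ | x.2 ∈ A} ×ˢ Set.univ) =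
      {q : RVec 2 dJ × RVec 2 dJ | q.1.1 0 < q.2.1 0 ∧ q.1.1 1 < q.2.1 1 ∧
        q.1.2 ∈ A ∧ q.2.2 ∈ A} := by
    ext q; simp [hF1def, Set.mem_prod]; tauto
  have e2 : F2 ∩ ({x : RVec 2 dJ | x.2 ∈ A} ×ˢ Set.univ) =
      {q : RVec 2 dJ × RVec 2 dJ | q.2.1 0 < q.1.1 0 ∧ q.2.1 1 < q.1.1 1 ∧
        q.1.2 ∈ A ∧ q.2.2 ∈ A} := by
    ext q; simp [hF2def, Set.mem_prod]; tauto
  rw [e1, e2, swap_meas ν A hA]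
  rw [Dab, pA, ENNReal.toReal_mul, ENNReal.toReal_inv]
  ring


lemma tau_eq (A : Set (Fin dJ → ℝ)) (hA : MeasurableSet A)
    (hp : ν {x : RVec 2 dJ | x.2 ∈ A} ≠ 0)
    (hc0 : ∀ t : ℝ, (ν[|{x : RVec 2 dJ | x.2 ∈ A}]) {x | x.1 0 = t} = 0)
    (hc1 : ∀ t : ℝ, (ν[|{x : RVec 2 dJ | x.2 ∈ A}]) {x | x.1 1 = t} = 0) :
    1 + condTau ν 0 1 A = 4 * Dab ν 0 1 A / (pA ν A) ^ 2 := by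
  set S : Set (RVec 2 dJ) := {x | x.2 ∈ A} with hSdef
  have hS : MeasurableSet S := hA.preimage measurable_snd
  set B : Set (RVec 2 dJ × RVec 2 dJ) := {q | q.1.2 ∈ A ∧ q.2.2 ∈ A} with hBdef
  have hBeq : B = S ×ˢ S := rfl
  have hB : MeasurableSet B := hBeq ▸ hS.prod hS
  have hBval : (ν.prod ν) B = ν S * ν S := by rw [hBeq, Measure.prod_prod]
  have hBne : (ν.prod ν) B ≠ 0 := by
    rw [hBval]; exact mul_ne_zero hp hp
  set μ2 := (ν.prod ν)[|B] with hμ2def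
  have : IsProbabilityMeasure μ2 := cond_isProbabilityMeasure hBne
  set C : Set (RVec 2 dJ × RVec 2 dJ) :=
    {q | 0 < (q.1.1 0 - q.2.1 0) * (q.1.1 1 - q.2.1 1)} with hCdef
  set D : Set (RVec 2 dJ × RVec 2 dJ) :=
    {q | (q.1.1 0 - q.2.1 0) * (q.1.1 1 - q.2.1 1) < 0} with hDdef
  have hC : MeasurableSet C := measurableSet_lt measurable_const ((m10.sub m20).mul (m11.sub m21))
  have hD : MeasurableSet D := measurableSet_lt ((m10.sub m20).mul (m11.sub m21)) measurable_const
  -- μ2 C = (νS*νS)⁻¹ * 2 * DE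
  set C1 : Set (RVec 2 dJ × RVec 2 dJ) :=
    {q | q.1.1 0 < q.2.1 0 ∧ q.1.1 1 < q.2.1 1 ∧ q.1.2 ∈ A ∧ q.2.2 ∈ A} with hC1def
  set C2 : Set (RVec 2 dJ × RVec 2 dJ) :=
    {q | q.2.1 0 < q.1.1 0 ∧ q.2.1 1 < q.1.1 1 ∧ q.1.2 ∈ A ∧ q.2.2 ∈ A} with hC2def
  have hBC : B ∩ C = C1 ∪ C2 := by
    ext q
    simp only [hBdef, hCdef, hC1def, hC2def, Set.mem_inter_iff, Set.mem_setOf_eq,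
      Set.mem_union, mul_pos_iff, sub_pos, sub_neg]
    tauto
  have hdisjC : Disjoint C1 C2 := by
    rw [Set.disjoint_left]
    intro q h1 h2
    exact absurd h2.1 (lt_asymm h1.1)
  have hμ2C : μ2 C = ((ν S) * (ν S))⁻¹ * (2 * (ν.prod ν) C1) := by
    rw [hμ2def, cond_apply hB, hBC, measure_union hdisjC (hC2meas A hA), swap_meas ν A hA,
      hBval, two_mul]
  -- ties have measure 0
  have mq1 : ∀ a : Fin 2, Measurable fun q : RVec 2 dJ × RVec 2 dJ => q.1.1 a := fun a =>
    (measurable_pi_apply _).comp (measurable_fst.comp measurable_fst)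
  have mq2 : ∀ a : Fin 2, Measurable fun q : RVec 2 dJ × RVec 2 dJ => q.2.1 a := fun a =>
    (measurable_pi_apply _).comp (measurable_fst.comp measurable_snd)
  have tiemeas : ∀ a : Fin 2, MeasurableSet {q : RVec 2 dJ × RVec 2 dJ | q.1.1 a = q.2.1 a} :=
    fun a => measurableSet_eq_fun (mq1 a) (mq2 a)
  have tieset : ∀ a : Fin 2, (∀ t : ℝ, ν (S ∩ {x | x.1 a = t}) = 0) →
      (ν.prod ν) (B ∩ {q : RVec 2 dJ × RVec 2 dJ | q.1.1 a = q.2.1 a}) = 0 := by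
    intro a htie
    rw [Measure.prod_apply (hB.inter (tiemeas a))]
    have hz : ∀ x : RVec 2 dJ,
        ν (Prod.mk x ⁻¹' (B ∩ {q : RVec 2 dJ × RVec 2 dJ | q.1.1 a = q.2.1 a})) = 0 := by
      intro x
      refine measure_mono_null ?_ (htie (x.1 a))
      intro y hy
      exact ⟨hy.1.2, hy.2.symm⟩
    simp only [hz, lintegral_zero]
  have htie0 : ∀ t : ℝ, ν (S ∩ {x | x.1 0 = t}) = 0 := tie0 ν 0 A hA hc0
  have htie1 : ∀ t : ℝ, ν (S ∩ {x | x.1 1 = t}) = 0 := tie0 ν 1 A hA hc1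
  -- μ2 of complement of C ∪ D is zero
  have hmucd : μ2 (C ∪ D)ᶜ = 0 := by
    rw [hμ2def, cond_apply hB]
    have hsub : B ∩ (C ∪ D)ᶜ ⊆
        (B ∩ {q : RVec 2 dJ × RVec 2 dJ | q.1.1 0 = q.2.1 0}) ∪
        (B ∩ {q : RVec 2 dJ × RVec 2 dJ | q.1.1 1 = q.2.1 1}) := by
      intro q hq
      obtain ⟨hqB, hqc⟩ := hq
      simp only [Set.mem_compl_iff, Set.mem_union, hCdef, hDdef, Set.mem_setOf_eq,
        not_or, not_lt] at hqc
      have h0 : (q.1.1 0 - q.2.1 0) * (q.1.1 1 - q.2.1 1) = 0 := le_antisymm hqc.1 hqc.2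
      rcases mul_eq_zero.1 h0 with h | h
      · exact Or.inl ⟨hqB, sub_eq_zero.1 h⟩
      · exact Or.inr ⟨hqB, sub_eq_zero.1 h⟩
    have : (ν.prod ν) (B ∩ (C ∪ D)ᶜ) = 0 :=
      measure_mono_null hsub (measure_union_null (tieset 0 htie0) (tieset 1 htie1))
    rw [this, mul_zero]
  have hdisjCD : Disjoint C D := by
    rw [Set.disjoint_left]
    intro q h1 h2
    simp only [hCdef, hDdef, Set.mem_setOf_eq] at h1 h2
    linarith
  have hsum : μ2 C + μ2 D = 1 := by
    have h1 : μ2 (C ∪ D) = μ2 C + μ2 D := measure_union hdisjCD hD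
    have h2 : μ2 (C ∪ D) = 1 := by
      have := measure_add_measure_compl (μ := μ2) (hC.union hD)
      rw [hmucd, add_zero] at this
      rw [this, measure_univ]
    rw [← h1, h2]
  have hfin : μ2 C ≠ ⊤ := measure_ne_top _ _
  have hfinD : μ2 D ≠ ⊤ := measure_ne_top _ _
  have hDr : (μ2 D).toReal = 1 - (μ2 C).toReal := by
    have := congrArg ENNReal.toReal hsum
    rw [ENNReal.toReal_add hfin hfinD, ENNReal.toReal_one] at this
    linarith
  have hCr : (μ2 C).toReal = 2 * Dab ν 0 1 A / (pA ν A) ^ 2 := by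
    rw [hμ2C, ENNReal.toReal_mul, ENNReal.toReal_mul, ENNReal.toReal_inv, ENNReal.toReal_mul,
      ENNReal.toReal_ofNat, Dab, pA]
    rw [hSdef]
    ring
  rw [condTau]
  rw [← hμ2def]
  have hCset : {q : RVec 2 dJ × RVec 2 dJ |
      0 < (q.1.1 0 - q.2.1 0) * (q.1.1 1 - q.2.1 1)} = C := rfl
  have hDset : {q : RVec 2 dJ × RVec 2 dJ |
      (q.1.1 0 - q.2.1 0) * (q.1.1 1 - q.2.1 1) < 0} = D := rfl
  rw [hCset, hDset, hDr, hCr]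
  ring

end StmtAux

/-- **Diagonal form of the asymptotic covariance matrix `Δ` for disjoint conditioning
subsets (bivariate case).** Here `ν` is the law of the random vector `X = (X₁, X₂, X_J)`. -/
theorem stmt2 {dJ m : ℕ}
    (ν : Measure (RVec 2 dJ)) [IsProbabilityMeasure ν]
    (A : Fin m → Set (Fin dJ → ℝ)) (hA : ∀ k, MeasurableSet (A k))
    (hp : ∀ k, 0 < pA ν (A k))
    (hdisj : ∀ k l, k ≠ l → A k ∩ A l = ∅)
    (hcont : ∀ k, CondMarginContinuous ν 0 (A k) ∧ CondMarginContinuous ν 1 (A k)) :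
    (Matrix.of fun k l =>
        64 * (Iq ν 0 1 0 1 (A k) (A l) / (pA ν (A k) * pA ν (A l)) +
          Dab ν 0 1 (A k) * Dab ν 0 1 (A l) * pAA ν (A k) (A l) /
            (pA ν (A k) ^ 3 * pA ν (A l) ^ 3) -
          Dab ν 0 1 (A l) * Jq ν 0 1 (A k) (A l) / (pA ν (A k) * pA ν (A l) ^ 3) -
          Dab ν 0 1 (A k) * Jq ν 0 1 (A l) (A k) / (pA ν (A l) * pA ν (A k) ^ 3))) =
      Matrix.diagonal (fun k =>
        16 * (4 * Iq ν 0 1 0 1 (A k) (A k) / pA ν (A k) ^ 2 -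
          (1 + condTau ν 0 1 (A k)) ^ 2 / (4 * pA ν (A k)))) := by
  ext k l
  simp only [Matrix.of_apply, Matrix.diagonal_apply]
  by_cases hkl : k = l
  · subst hkl
    rw [if_pos rfl]
    have hp' := hp k
    have hpne : ν {x : RVec 2 dJ | x.2 ∈ A k} ≠ 0 := by
      intro h
      rw [pA, h] at hp'
      simp at hp'
    have hJ := StmtAux.Jq_eq ν (A k) (hA k) hpne
    have hT := StmtAux.tau_eq ν (A k) (hA k) hpne (fun t => (hcont k).1 t) (fun t => (hcont k).2 t)
    have hpAA : pAA ν (A k) (A k) = pA ν (A k) := by simp [pAA, pA]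
    rw [hpAA, hJ, hT]
    have hPne : pA ν (A k) ≠ 0 := ne_of_gt hp'
    field_simp
    ring
  · rw [if_neg hkl]
    have h1 : A k ∩ A l = ∅ := hdisj k l hkl
    have h2 : A l ∩ A k = ∅ := hdisj l k (Ne.symm hkl)
    have hI : Iq ν 0 1 0 1 (A k) (A l) = 0 := by simp [Iq, h1]
    have hJ1 : Jq ν 0 1 (A k) (A l) = 0 := by simp [Jq, h1]
    have hJ2 : Jq ν 0 1 (A l) (A k) = 0 := by simp [Jq, h2]
    have hpAA : pAA ν (A k) (A l) = 0 := by
      have he : {x : RVec 2 dJ | x.2 ∈ A k ∧ x.2 ∈ A l} = ∅ := by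
        ext x
        simp only [Set.mem_setOf_eq, Set.mem_empty_iff_false, iff_false]
        rintro ⟨h3, h4⟩
        exact Set.eq_empty_iff_forall_notMem.1 h1 x.2 ⟨h3, h4⟩
      simp [pAA, he]
    rw [hI, hJ1, hJ2, hpAA]
    ring
end
end

section
/- Let X = (X_I, X_J) be a random vector with X_I = (X₁, …, X_p) ∈ ℝ^p, p ≥ 2, and X_J ∈ ℝ^{d−p}, with the conditional distribution of each X_a given X_J ∈ A_{k,J} continuous for every a and k. If the subsets A_{1,J}, …, A_{m,J} are pairwise disjoint, then for every two pairs (a,b) and (a′,b′) with a < b and a′ < b′, the m×m block Δ_{(a,b),(a′,b′)} := 64·[ I_{a,b,a′,b′,k,l}/(p_k p_l) + D_{a,b,k} D_{a′,b′,l} p_{k,l}/(p_k³ p_l³) − D_{a′,b′,l} J_{a,b,k,l}/(p_k p_l³) − D_{a,b,k} J_{a′,b′,l,k}/(p_l p_k³) ]_{1≤k,l≤m} is diagonal, with k-th diagonal entry 16·( 4 I_{a,b,a′,b′,k,k}/p_k² − (1 + τ_{a,b|X_J∈A_{k,J}})(1 + τ_{a′,b′|X_J∈A_{k,J}})/(4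 p_k) ). -/
/- Common framework: conditional Kendall's tau given discretized conditioning events.

An observation is a pair `(x_I, x_J) : (Fin p → ℝ) × (Fin dJ → ℝ)`, where `x_I` is the
conditioned vector and `x_J` the conditioning vector. -/

open MeasureTheory ProbabilityTheory Filter Finset
open scoped Topology Classical

noncomputable section

namespace CondKTAux

open CondKT

variable {p dJ : ℕ}

/-- The event `{x | x_J ∈ A}`. -/
def SJ (p : ℕ) {dJ : ℕ} (A : Set (Fin dJ → ℝ)) : Set (RVec p dJ) := {x | x.2 ∈ A}

/-- The concordance set whose measure is `Dab`. -/
def Dset (a b : Fin p) (A : Set (Fin dJ → ℝ)) : Set (RVec p dJ × RVec p dJ) :=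
  {q | q.1.1 a < q.2.1 a ∧ q.1.1 b < q.2.1 b ∧ q.1.2 ∈ A ∧ q.2.2 ∈ A}

/-- The swapped concordance set. -/
def Dset' (a b : Fin p) (A : Set (Fin dJ → ℝ)) : Set (RVec p dJ × RVec p dJ) :=
  {q | q.2.1 a < q.1.1 a ∧ q.2.1 b < q.1.1 b ∧ q.1.2 ∈ A ∧ q.2.2 ∈ A}

lemma measQ1 (a : Fin p) : Measurable fun q : RVec p dJ × RVec p dJ => q.1.1 a :=
  (measurable_pi_apply a).comp (measurable_fst.comp measurable_fst)

lemma measQ2 (a : Fin p) : Measurable fun q : RVec p dJ × RVec p dJ => q.2.1 a :=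
  (measurable_pi_apply a).comp (measurable_fst.comp measurable_snd)

lemma measSJ {A : Set (Fin dJ → ℝ)} (hA : MeasurableSet A) :
    MeasurableSet (SJ p A) := measurable_snd hA

lemma measA1 {A : Set (Fin dJ → ℝ)} (hA : MeasurableSet A) :
    MeasurableSet {q : RVec p dJ × RVec p dJ | q.1.2 ∈ A} :=
  (measurable_snd.comp measurable_fst) hA

lemma measA2 {A : Set (Fin dJ → ℝ)} (hA : MeasurableSet A) :
    MeasurableSet {q : RVec p dJ × RVec p dJ | q.2.2 ∈ A} :=
  (measurable_snd.comp measurable_snd) hA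

lemma measDset (a b : Fin p) {A : Set (Fin dJ → ℝ)} (hA : MeasurableSet A) :
    MeasurableSet (Dset a b A) :=
  ((measurableSet_lt (measQ1 a) (measQ2 a)).inter
    ((measurableSet_lt (measQ1 b) (measQ2 b)).inter ((measA1 hA).inter (measA2 hA))))

lemma measDset' (a b : Fin p) {A : Set (Fin dJ → ℝ)} (hA : MeasurableSet A) :
    MeasurableSet (Dset' a b A) :=
  ((measurableSet_lt (measQ2 a) (measQ1 a)).inter
    ((measurableSet_lt (measQ2 b) (measQ1 b)).inter ((measA1 hA).inter (measA2 hA))))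

variable (ν : MeasureTheory.Measure (RVec p dJ)) [MeasureTheory.IsProbabilityMeasure ν]

open MeasureTheory ProbabilityTheory

lemma prod_swap_Dset (a b : Fin p) {A : Set (Fin dJ → ℝ)} (hA : MeasurableSet A) :
    (ν.prod ν) (Dset' a b A) = (ν.prod ν) (Dset a b A) := by
  have h : Prod.swap ⁻¹' (Dset a b A) = Dset' a b A := by
    ext q; simp only [Set.mem_preimage, Dset, Dset', Set.mem_setOf_eq, Prod.fst_swap,
      Prod.snd_swap]
    tauto
  rw [← h]
  exact (MeasureTheory.Measure.measurePreserving_swap).measure_preimage (measDset a b hA).nullMeasurableSet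

lemma restrict_null {A : Set (Fin dJ → ℝ)} (hA : MeasurableSet A) {a : Fin p}
    (hc : CondMarginContinuous ν a A) (t : ℝ) :
    ν (SJ p A ∩ {x | x.1 a = t}) = 0 := by
  have h := hc t
  rw [CondMarginContinuous] at hc
  have h2 : ν[|SJ p A] {x | x.1 a = t} = 0 := hc t
  rw [cond_apply (measSJ hA) ν] at h2
  rcases mul_eq_zero.mp h2 with h3 | h3
  · exact absurd h3 (ENNReal.inv_ne_zero.mpr (measure_ne_top ν _))
  · exact h3

lemma ties_null {A : Set (Fin dJ → ℝ)} (hA : MeasurableSet A) {a : Fin p}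
    (hc : CondMarginContinuous ν a A) :
    (ν.prod ν) {q : RVec p dJ × RVec p dJ | q.1.1 a = q.2.1 a ∧ q.1.2 ∈ A ∧ q.2.2 ∈ A} = 0 := by
  have hE : MeasurableSet {q : RVec p dJ × RVec p dJ | q.1.1 a = q.2.1 a ∧ q.1.2 ∈ A ∧ q.2.2 ∈ A} :=
    (measurableSet_eq_fun (measQ1 a) (measQ2 a)).inter ((measA1 hA).inter (measA2 hA))
  rw [Measure.prod_apply hE]
  have hz : ∀ x : RVec p dJ,
      ν (Prod.mk x ⁻¹' {q : RVec p dJ × RVec p dJ | q.1.1 a = q.2.1 a ∧ q.1.2 ∈ A ∧ q.2.2 ∈ A})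
        = 0 := by
    intro x
    refine measure_mono_null ?_ (restrict_null ν hA hc (x.1 a))
    intro y hy
    simp only [Set.mem_preimage, Set.mem_setOf_eq] at hy
    exact ⟨hy.2.2, hy.1.symm⟩
  simp only [hz, lintegral_zero]

end CondKTAux

namespace CondKTAux
open CondKT MeasureTheory ProbabilityTheory

variable {p dJ : ℕ} (ν : Measure (RVec p dJ)) [IsProbabilityMeasure ν]

lemma condTau_eq {A : Set (Fin dJ → ℝ)} (hA : MeasurableSet A) (hpk : 0 < pA ν A)
    {a b : Fin p} (hca : CondMarginContinuous ν a A) (hcb : CondMarginContinuous ν b A) :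
    condTau ν a b A = 4 * Dab ν a b A / (pA ν A) ^ 2 - 1 := by
  set S := SJ p A with hSdef
  set C : Set (RVec p dJ × RVec p dJ) := {q | q.1.2 ∈ A ∧ q.2.2 ∈ A} with hCdef
  have hC : MeasurableSet C := (measA1 hA).inter (measA2 hA)
  have hCval : (ν.prod ν) C = ν S * ν S := by
    have h : C = S ×ˢ S := by
      ext q; simp [hCdef, hSdef, SJ, Set.mem_prod]
    rw [h, Measure.prod_prod]
  set G : Set (RVec p dJ × RVec p dJ) :=
    {q | 0 < (q.1.1 a - q.2.1 a) * (q.1.1 b - q.2.1 b)} with hGdef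
  set L : Set (RVec p dJ × RVec p dJ) :=
    {q | (q.1.1 a - q.2.1 a) * (q.1.1 b - q.2.1 b) < 0} with hLdef
  have hG : MeasurableSet G :=
    measurableSet_lt measurable_const (((measQ1 a).sub (measQ2 a)).mul ((measQ1 b).sub (measQ2 b)))
  have hCG : C ∩ G = Dset' a b A ∪ Dset a b A := by
    ext q
    simp only [hCdef, hGdef, Set.mem_inter_iff, Set.mem_setOf_eq, Set.mem_union, Dset, Dset',
      mul_pos_iff, sub_pos, sub_neg]
    tauto
  have hGD : (ν.prod ν) (C ∩ G) = 2 * (ν.prod ν) (Dset a b A) := by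
    rw [hCG, measure_union ?dis (measDset a b hA), prod_swap_Dset ν a b hA, two_mul]
    case dis =>
      rw [Set.disjoint_left]
      intro q h1 h2
      exact absurd h2.1 (not_lt.mpr (le_of_lt h1.1))
  have hTa := ties_null ν hA hca
  have hTb := ties_null ν hA hcb
  have hsub1 : C ∩ L ⊆ C \ G := by
    rintro q ⟨hqC, hqL⟩
    exact ⟨hqC, fun hg => by
      have hg' : 0 < (q.1.1 a - q.2.1 a) * (q.1.1 b - q.2.1 b) := hg
      exact lt_asymm hqL hg'⟩
  have hsub2 : C \ G ⊆ (C ∩ L) ∪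
      ({q : RVec p dJ × RVec p dJ | q.1.1 a = q.2.1 a ∧ q.1.2 ∈ A ∧ q.2.2 ∈ A} ∪
       {q : RVec p dJ × RVec p dJ | q.1.1 b = q.2.1 b ∧ q.1.2 ∈ A ∧ q.2.2 ∈ A}) := by
    rintro q ⟨hqC, hqG⟩
    rcases lt_trichotomy ((q.1.1 a - q.2.1 a) * (q.1.1 b - q.2.1 b)) 0 with h | h | h
    · exact Or.inl ⟨hqC, h⟩
    · rcases mul_eq_zero.mp h with h' | h'
      · exact Or.inr (Or.inl ⟨sub_eq_zero.mp h', hqC⟩)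
      · exact Or.inr (Or.inr ⟨sub_eq_zero.mp h', hqC⟩)
    · exact absurd h hqG
  have hLD : (ν.prod ν) (C ∩ L) = (ν.prod ν) (C \ G) := by
    refine le_antisymm (measure_mono hsub1) ?_
    calc (ν.prod ν) (C \ G) ≤ (ν.prod ν) ((C ∩ L) ∪ _) := measure_mono hsub2
      _ ≤ (ν.prod ν) (C ∩ L) + (ν.prod ν)
          ({q : RVec p dJ × RVec p dJ | q.1.1 a = q.2.1 a ∧ q.1.2 ∈ A ∧ q.2.2 ∈ A} ∪
           {q : RVec p dJ × RVec p dJ | q.1.1 b = q.2.1 b ∧ q.1.2 ∈ A ∧ q.2.2 ∈ A}) :=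
        measure_union_le _ _
      _ = (ν.prod ν) (C ∩ L) := by rw [measure_union_null hTa hTb, add_zero]
  have hsplit : (ν.prod ν) C = (ν.prod ν) (C ∩ G) + (ν.prod ν) (C \ G) :=
    (measure_inter_add_diff C hG).symm
  -- real-number bookkeeping
  have hP : pA ν A = (ν S).toReal := rfl
  have hDab : Dab ν a b A = ((ν.prod ν) (Dset a b A)).toReal := rfl
  have hfin1 : (ν.prod ν) (C ∩ G) ≠ ⊤ := measure_ne_top _ _
  have hfin2 : (ν.prod ν) (C \ G) ≠ ⊤ := measure_ne_top _ _
  have hCL : ((ν.prod ν) (C ∩ L)).toReal =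
      pA ν A * pA ν A - 2 * Dab ν a b A := by
    have h1 : ((ν.prod ν) C).toReal =
        ((ν.prod ν) (C ∩ G)).toReal + ((ν.prod ν) (C \ G)).toReal := by
      rw [hsplit, ENNReal.toReal_add hfin1 hfin2]
    have h2 : ((ν.prod ν) (C ∩ G)).toReal = 2 * Dab ν a b A := by
      rw [hGD, ENNReal.toReal_mul, hDab]; norm_num
    have h3 : ((ν.prod ν) C).toReal = pA ν A * pA ν A := by
      rw [hCval, ENNReal.toReal_mul, hP]
    rw [hLD]
    linarith [h1, h2, h3]
  have hCGr : ((ν.prod ν) (C ∩ G)).toReal = 2 * Dab ν a b A := by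
    rw [hGD, ENNReal.toReal_mul, hDab]; norm_num
  have hCr : (((ν.prod ν) C)⁻¹).toReal = (pA ν A * pA ν A)⁻¹ := by
    rw [ENNReal.toReal_inv, hCval, ENNReal.toReal_mul, hP]
  have hPne : pA ν A ≠ 0 := ne_of_gt hpk
  rw [condTau, cond_apply hC, cond_apply hC]
  show (((ν.prod ν) C)⁻¹ * (ν.prod ν) (C ∩ G)).toReal -
      (((ν.prod ν) C)⁻¹ * (ν.prod ν) (C ∩ L)).toReal = _
  rw [ENNReal.toReal_mul, ENNReal.toReal_mul, hCr, hCGr, hCL]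
  field_simp
  ring

end CondKTAux

namespace CondKTAux
open CondKT MeasureTheory ProbabilityTheory

variable {p dJ : ℕ} (ν : Measure (RVec p dJ)) [IsProbabilityMeasure ν]

lemma Jq_self {A : Set (Fin dJ → ℝ)} (hA : MeasurableSet A) (hpk : 0 < pA ν A)
    (a b : Fin p) : Jq ν a b A A = Dab ν a b A / pA ν A := by
  have hS := measSJ (p := p) hA
  have hD := measDset a b hA
  have hD' := measDset' a b hA
  set F : RVec p dJ × RVec p dJ → ℝ :=
    fun q => ((Dset a b A).indicator 1 q + (Dset' a b A).indicator 1 q) / 2 with hF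
  have hFint : Integrable F (ν.prod ν) :=
    (((integrable_const (1:ℝ)).indicator hD).add
      ((integrable_const (1:ℝ)).indicator hD')).div_const 2
  have key : ∀ x : RVec p dJ, (SJ p A).indicator
      (fun x => ∫ y, (if y.2 ∈ A ∩ A then (1:ℝ) else 0) * kerPi a b x y ∂ν) x
      = ∫ y, F (x, y) ∂ν := by
    intro x
    by_cases hx : x ∈ SJ p A
    · rw [Set.indicator_of_mem hx]
      have hx2 : x.2 ∈ A := hx
      have heq : (fun y => (if y.2 ∈ A ∩ A then (1:ℝ) else 0) * kerPi a b x y)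
          = fun y => F (x, y) := by
        funext y
        by_cases hy : y.2 ∈ A
        · simp only [hF, Set.indicator_apply, Dset, Dset', Set.mem_setOf_eq,
            Set.mem_inter_iff, hy, hx2, and_true, and_self, if_true, kerPi, Pi.one_apply,
            one_mul]
        · simp only [hF, Set.indicator_apply, Dset, Dset', Set.mem_setOf_eq,
            Set.mem_inter_iff, hy, hx2, and_false, if_false, and_true, and_self, zero_mul]
          norm_num
      rw [heq]
    · rw [Set.indicator_of_notMem hx]
      have hx2 : x.2 ∉ A := hx
      have heq : (fun y => F (x, y)) = fun _ => (0:ℝ) := by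
        funext y
        simp only [hF, Set.indicator_apply, Dset, Dset', Set.mem_setOf_eq, hx2, false_and,
          and_false, if_false]
        norm_num
      rw [heq, integral_zero]
  have step1 : Jq ν a b A A = (ν (SJ p A))⁻¹.toReal •
      ∫ x in SJ p A, (∫ y, (if y.2 ∈ A ∩ A then (1:ℝ) else 0) * kerPi a b x y ∂ν) ∂ν := by
    rw [Jq, PA, ProbabilityTheory.cond, integral_smul_measure]
    rfl
  rw [step1, ← integral_indicator hS]
  simp_rw [key]
  rw [← integral_prod F hFint]
  have hval : ∫ q, F q ∂(ν.prod ν) =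
      (((ν.prod ν) (Dset a b A)).toReal + ((ν.prod ν) (Dset' a b A)).toReal) / 2 := by
    have i1 : Integrable ((Dset a b A).indicator (1 : RVec p dJ × RVec p dJ → ℝ)) (ν.prod ν) :=
      (integrable_const 1).indicator hD
    have i2 : Integrable ((Dset' a b A).indicator (1 : RVec p dJ × RVec p dJ → ℝ)) (ν.prod ν) :=
      (integrable_const 1).indicator hD'
    rw [hF]
    rw [integral_div, integral_add i1 i2, integral_indicator_one hD,
      integral_indicator_one hD']
    rfl
  rw [hval, prod_swap_Dset ν a b hA]
  have hDab : Dab ν a b A = ((ν.prod ν) (Dset a b A)).toReal := rfl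
  have hP : pA ν A = (ν (SJ p A)).toReal := rfl
  rw [ENNReal.toReal_inv, ← hP, ← hDab, smul_eq_mul]
  rw [inv_mul_eq_div]
  congr 1
  ring
end CondKTAux


open CondKT

/-- **Diagonal form of the blocks `Δ_{(a,b),(a',b')}` of the asymptotic covariance matrix for
pairwise disjoint conditioning subsets (general dimension `p`).** -/
theorem stmt6 {p dJ m : ℕ} (hp2 : 2 ≤ p)
    (ν : Measure (RVec p dJ)) [IsProbabilityMeasure ν]
    (A : Fin m → Set (Fin dJ → ℝ)) (hA : ∀ k, MeasurableSet (A k))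
    (hpk : ∀ k, 0 < pA ν (A k))
    (hdisj : ∀ k l, k ≠ l → A k ∩ A l = ∅)
    (hcont : ∀ (k : Fin m) (a : Fin p), CondMarginContinuous ν a (A k)) :
    ∀ (a b a' b' : Fin p), a < b → a' < b' →
      (Matrix.of fun k l : Fin m =>
          64 * (Iq ν a b a' b' (A k) (A l) / (pA ν (A k) * pA ν (A l)) +
            Dab ν a b (A k) * Dab ν a' b' (A l) * pAA ν (A k) (A l) /
              (pA ν (A k) ^ 3 * pA ν (A l) ^ 3) -
            Dab ν a' b' (A l) * Jq ν a b (A k) (A l) / (pA ν (A k) * pA ν (A l) ^ 3) -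
            Dab ν a b (A k) * Jq ν a' b' (A l) (A k) / (pA ν (A l) * pA ν (A k) ^ 3))) =
        Matrix.diagonal (fun k =>
          16 * (4 * Iq ν a b a' b' (A k) (A k) / pA ν (A k) ^ 2 -
            (1 + condTau ν a b (A k)) * (1 + condTau ν a' b' (A k)) / (4 * pA ν (A k)))) := by

  intro a b a' b' hab ha'b'
  apply Matrix.ext
  intro k l
  by_cases hkl : k = l
  · subst hkl
    rw [Matrix.of_apply, Matrix.diagonal_apply_eq]
    have hpAA : pAA ν (A k) (A k) = pA ν (A k) := by
      simp [pAA, pA]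
    rw [hpAA, CondKTAux.Jq_self ν (hA k) (hpk k) a b, CondKTAux.Jq_self ν (hA k) (hpk k) a' b',
      CondKTAux.condTau_eq ν (hA k) (hpk k) (hcont k a) (hcont k b),
      CondKTAux.condTau_eq ν (hA k) (hpk k) (hcont k a') (hcont k b')]
    have h : pA ν (A k) ≠ 0 := ne_of_gt (hpk k)
    field_simp
    ring
  · rw [Matrix.of_apply, Matrix.diagonal_apply_ne _ hkl]
    have h0 : A k ∩ A l = ∅ := hdisj k l hkl
    have h0' : A l ∩ A k = ∅ := hdisj l k (Ne.symm hkl)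
    have hIq : Iq ν a b a' b' (A k) (A l) = 0 := by
      rw [Iq]; simp [h0]
    have hJ1 : Jq ν a b (A k) (A l) = 0 := by rw [Jq]; simp [h0]
    have hJ2 : Jq ν a' b' (A l) (A k) = 0 := by rw [Jq]; simp [h0']
    have hpAA : pAA ν (A k) (A l) = 0 := by
      rw [pAA]
      have he : {x : RVec p dJ | x.2 ∈ A k ∧ x.2 ∈ A l} = ∅ := by
        ext x
        simp only [Set.mem_setOf_eq, Set.mem_empty_iff_false, iff_false, not_and]
        intro h1 h2
        exact absurd (Set.mem_inter h1 h2) (by rw [h0]; exact Set.notMem_empty _)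
      rw [he, measure_empty, ENNReal.toReal_zero]
    rw [hIq, hJ1, hJ2, hpAA]
    ring
end
end

section
/- There exists a trivariate random vector (X₁, X₂, X₃) — explicitly: X₃ uniform on [0,4]; given X₃ = x with x ∈ [0,1], X₁ and X₂ are independent and each uniform on [0,1]; given x ∈ (1,2], X₁ and X₂ are independent and each uniform on [2,3]; given x ∈ (2,3], X₁ and X₂ are independent with X₁ uniform on [0,1] and X₂ uniform on [2,3]; given x ∈ (3,4], X₁ and X₂ are independent with X₁ uniform on [2,3] and X₂ uniform on [0,1] — such that the pointwise conditional Kendall's tau satisfies τ_{1,2|X₃=x} = 0 for every x ∈ [0,4], while the subset-conditional Kendall's taus satisfy τ_{1,2|X₃∈[0,2]} = 1/2 and τ_{1,2|X₃∈(2,4]} = −1/2. Hence constancy of the pointwise conditional Kendall's tau does not imply constancy of the subset-conditional Kendall's tau. -/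
/- Common framework: conditional Kendall's tau given discretized conditioning events.

An observation is a pair `(x_I, x_J) : (Fin p → ℝ) × (Fin dJ → ℝ)`, where `x_I` is the
conditioned vector and `x_J` the conditioning vector. -/

open MeasureTheory ProbabilityTheory Filter Finset
open scoped Topology Classical

noncomputable section

namespace CondKT

/-- Kendall's tau of a bivariate distribution `μ`. -/
def ktau2 (μ : Measure (ℝ × ℝ)) : ℝ :=
  ((μ.prod μ) {q : (ℝ × ℝ) × (ℝ × ℝ) | 0 < (q.1.1 - q.2.1) * (q.1.2 - q.2.2)}).toReal -
    ((μ.prod μ) {q : (ℝ × ℝ) × (ℝ × ℝ) | (q.1.1 - q.2.1) * (q.1.2 - q.2.2) < 0}).toReal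

/-- The subset-conditional Kendall's tau `τ_{1,2|X₃ ∈ A}` of a trivariate
distribution `μ` (the law of `(X₁, X₂, X₃)`). -/
def sCKT (μ : Measure (ℝ × ℝ × ℝ)) (A : Set ℝ) : ℝ :=
  (((μ.prod μ)[|{q : (ℝ × ℝ × ℝ) × (ℝ × ℝ × ℝ) | q.1.2.2 ∈ A ∧ q.2.2.2 ∈ A}])
      {q : (ℝ × ℝ × ℝ) × (ℝ × ℝ × ℝ) | 0 < (q.1.1 - q.2.1) * (q.1.2.1 - q.2.2.1)}).toReal -
    (((μ.prod μ)[|{q : (ℝ × ℝ × ℝ) × (ℝ × ℝ × ℝ) | q.1.2.2 ∈ A ∧ q.2.2.2 ∈ A}])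
      {q : (ℝ × ℝ × ℝ) × (ℝ × ℝ × ℝ) | (q.1.1 - q.2.1) * (q.1.2.1 - q.2.2.1) < 0}).toReal

/-- The uniform distribution on `[a, b]`. -/
def unif (a b : ℝ) : Measure ℝ := (volume : Measure ℝ)[|Set.Icc a b]

end CondKT

open CondKT
namespace CEx

open scoped ENNReal

/-! ### Generic measure lemmas -/

lemma smul_prod' {α β : Type*} [MeasurableSpace α] [MeasurableSpace β]
    (c : ℝ≥0∞) (μ : Measure α) (ν : Measure β) [SFinite ν] :
    (c • μ).prod ν = c • (μ.prod ν) := by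
  ext s hs
  rw [Measure.smul_apply, Measure.prod_apply hs, Measure.prod_apply hs,
    lintegral_smul_measure, smul_eq_mul]

lemma prod_smul' {α β : Type*} [MeasurableSpace α] [MeasurableSpace β]
    (c : ℝ≥0∞) (μ : Measure α) (ν : Measure β) [SFinite ν] (hc : c ≠ ⊤) :
    μ.prod (c • ν) = c • (μ.prod ν) := by
  ext s hs
  rw [Measure.smul_apply, Measure.prod_apply hs, Measure.prod_apply hs, smul_eq_mul,
    ← lintegral_const_mul' c _ hc]
  simp only [Measure.smul_apply, smul_eq_mul]

lemma meas_full {X : Type*} [MeasurableSpace X] (π : Measure X) [IsProbabilityMeasure π]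
    {R T : Set X} (hR : π R = 1) (hsub : R ⊆ T) : π T = 1 :=
  le_antisymm prob_le_one (hR ▸ measure_mono hsub)

lemma meas_null {X : Type*} [MeasurableSpace X] (π : Measure X) [IsProbabilityMeasure π]
    {R T : Set X} (hR : π R = 1) (hmR : MeasurableSet R) (hdisj : ∀ x ∈ R, x ∉ T) : π T = 0 := by
  have hc : π Rᶜ = 0 := by
    rw [measure_compl hmR (measure_ne_top π R), hR, measure_univ, tsub_self]
  exact measure_mono_null (fun x hx => by by_contra h; exact hdisj x (not_not.mp h) hx) hc

/-! ### Measurability of concordance/discordance sets -/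

lemma measurable_concfun :
    Measurable (fun q : (ℝ×ℝ)×(ℝ×ℝ) => (q.1.1 - q.2.1) * (q.1.2 - q.2.2)) := by fun_prop

lemma measurableSet_conc :
    MeasurableSet {q : (ℝ×ℝ)×(ℝ×ℝ) | 0 < (q.1.1 - q.2.1) * (q.1.2 - q.2.2)} :=
  measurableSet_lt measurable_const measurable_concfun

lemma measurableSet_disc :
    MeasurableSet {q : (ℝ×ℝ)×(ℝ×ℝ) | (q.1.1 - q.2.1) * (q.1.2 - q.2.2) < 0} :=
  measurableSet_lt measurable_concfun measurable_const

/-! ### Symmetry: concordance and discordance have equal probability under a product law -/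

lemma mp_T (m n : Measure ℝ) [IsProbabilityMeasure m] [IsProbabilityMeasure n] :
    MeasurePreserving (fun q : (ℝ×ℝ)×(ℝ×ℝ) => ((q.2.1, q.1.2), (q.1.1, q.2.2)))
      ((m.prod n).prod (m.prod n)) ((m.prod n).prod (m.prod n)) := by
  have e1 := measurePreserving_prodAssoc m n (m.prod n)
  have e2 := ((MeasurePreserving.id m).prod
    ((measurePreserving_prodAssoc n m n).symm MeasurableEquiv.prodAssoc))
  have e3 := (MeasurePreserving.id m).prod
    ((Measure.measurePreserving_swap (μ := n) (ν := m)).prod (MeasurePreserving.id n))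
  have e4 := (MeasurePreserving.id m).prod (measurePreserving_prodAssoc m n n)
  have e5 := (measurePreserving_prodAssoc m m (n.prod n)).symm MeasurableEquiv.prodAssoc
  have f := (Measure.measurePreserving_swap (μ := m) (ν := m)).prod
    (MeasurePreserving.id (n.prod n))
  have d1 := measurePreserving_prodAssoc m m (n.prod n)
  have d2 := (MeasurePreserving.id m).prod
    ((measurePreserving_prodAssoc m n n).symm MeasurableEquiv.prodAssoc)
  have d3 := (MeasurePreserving.id m).prod
    ((Measure.measurePreserving_swap (μ := m) (ν := n)).prod (MeasurePreserving.id n))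
  have d4 := (MeasurePreserving.id m).prod (measurePreserving_prodAssoc n m n)
  have d5 := (measurePreserving_prodAssoc m n (m.prod n)).symm MeasurableEquiv.prodAssoc
  exact d5.comp (d4.comp (d3.comp (d2.comp (d1.comp (f.comp
    (e5.comp (e4.comp (e3.comp (e2.comp e1)))))))))

lemma conc_eq_disc (m n : Measure ℝ) [IsProbabilityMeasure m] [IsProbabilityMeasure n] :
    ((m.prod n).prod (m.prod n)) {q : (ℝ×ℝ)×(ℝ×ℝ) | 0 < (q.1.1 - q.2.1) * (q.1.2 - q.2.2)} =
    ((m.prod n).prod (m.prod n)) {q : (ℝ×ℝ)×(ℝ×ℝ) | (q.1.1 - q.2.1) * (q.1.2 - q.2.2) < 0} := by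
  have hT := mp_T m n
  have hpre : (fun q : (ℝ×ℝ)×(ℝ×ℝ) => ((q.2.1, q.1.2), (q.1.1, q.2.2))) ⁻¹'
      {q : (ℝ×ℝ)×(ℝ×ℝ) | 0 < (q.1.1 - q.2.1) * (q.1.2 - q.2.2)} =
      {q : (ℝ×ℝ)×(ℝ×ℝ) | (q.1.1 - q.2.1) * (q.1.2 - q.2.2) < 0} := by
    ext q
    simp only [Set.mem_preimage, Set.mem_setOf_eq]
    constructor
    · intro h; nlinarith
    · intro h; nlinarith
  rw [← hpre, hT.measure_preimage measurableSet_conc.nullMeasurableSet]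

lemma ktau2_prod (m n : Measure ℝ) [IsProbabilityMeasure m] [IsProbabilityMeasure n] :
    ktau2 (m.prod n) = 0 := by
  rw [ktau2, conc_eq_disc, sub_self]

/-! ### The uniform measures -/

lemma probIcc (a b : ℝ) (h : b - a = 1) :
    IsProbabilityMeasure ((volume : Measure ℝ).restrict (Set.Icc a b)) :=
  ⟨by rw [Measure.restrict_apply_univ, Real.volume_Icc, h, ENNReal.ofReal_one]⟩

lemma probIoc (a b : ℝ) (h : b - a = 1) :
    IsProbabilityMeasure ((volume : Measure ℝ).restrict (Set.Ioc a b)) :=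
  ⟨by rw [Measure.restrict_apply_univ, Real.volume_Ioc, h, ENNReal.ofReal_one]⟩

lemma unif_eq_Icc (a b : ℝ) (h : b - a = 1) :
    unif a b = (volume : Measure ℝ).restrict (Set.Icc a b) := by
  unfold CondKT.unif ProbabilityTheory.cond
  rw [Real.volume_Icc, h, ENNReal.ofReal_one, inv_one, one_smul]

def m01 : Measure ℝ := (volume : Measure ℝ).restrict (Set.Icc 0 1)
def m23 : Measure ℝ := (volume : Measure ℝ).restrict (Set.Icc 2 3)
def t1 : Measure ℝ := (volume : Measure ℝ).restrict (Set.Icc 0 1)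
def t2 : Measure ℝ := (volume : Measure ℝ).restrict (Set.Ioc 1 2)
def t3 : Measure ℝ := (volume : Measure ℝ).restrict (Set.Ioc 2 3)
def t4 : Measure ℝ := (volume : Measure ℝ).restrict (Set.Ioc 3 4)

instance : IsProbabilityMeasure m01 := probIcc 0 1 (by norm_num)
instance : IsProbabilityMeasure m23 := probIcc 2 3 (by norm_num)
instance : IsProbabilityMeasure t1 := probIcc 0 1 (by norm_num)
instance : IsProbabilityMeasure t2 := probIoc 1 2 (by norm_num)
instance : IsProbabilityMeasure t3 := probIoc 2 3 (by norm_num)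
instance : IsProbabilityMeasure t4 := probIoc 3 4 (by norm_num)

lemma unif01 : unif 0 1 = m01 := unif_eq_Icc 0 1 (by norm_num)
lemma unif23 : unif 2 3 = m23 := unif_eq_Icc 2 3 (by norm_num)

instance : IsProbabilityMeasure (unif 0 1) := by rw [unif01]; infer_instance
instance : IsProbabilityMeasure (unif 2 3) := by rw [unif23]; infer_instance

/-! ### The joint law -/

def nu1 : Measure (ℝ×ℝ×ℝ) := m01.prod (m01.prod t1)
def nu2 : Measure (ℝ×ℝ×ℝ) := m23.prod (m23.prod t2)
def nu3 : Measure (ℝ×ℝ×ℝ) := m01.prod (m23.prod t3)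
def nu4 : Measure (ℝ×ℝ×ℝ) := m23.prod (m01.prod t4)

instance : IsProbabilityMeasure nu1 := by unfold nu1; infer_instance
instance : IsProbabilityMeasure nu2 := by unfold nu2; infer_instance
instance : IsProbabilityMeasure nu3 := by unfold nu3; infer_instance
instance : IsProbabilityMeasure nu4 := by unfold nu4; infer_instance

def mubig : Measure (ℝ×ℝ×ℝ) := (4⁻¹ : ℝ≥0∞) • (nu1 + nu2 + nu3 + nu4)

instance : IsProbabilityMeasure mubig := by
  constructor
  rw [mubig]
  simp only [Measure.smul_apply, Measure.add_apply, measure_univ, smul_eq_mul]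
  rw [show (1+1+1+1 : ℝ≥0∞) = 4 by norm_num]
  exact ENNReal.inv_mul_cancel (by norm_num) (by norm_num)

end CEx
namespace CEx

open scoped ENNReal

/-! ### The kernel -/

def kappa : Kernel ℝ (ℝ×ℝ) :=
  Kernel.piecewise (measurableSet_Iic (a := (1:ℝ)))
    (Kernel.const ℝ ((unif 0 1).prod (unif 0 1)))
    (Kernel.piecewise (measurableSet_Iic (a := (2:ℝ)))
      (Kernel.const ℝ ((unif 2 3).prod (unif 2 3)))
      (Kernel.piecewise (measurableSet_Iic (a := (3:ℝ)))
        (Kernel.const ℝ ((unif 0 1).prod (unif 2 3)))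
        (Kernel.const ℝ ((unif 2 3).prod (unif 0 1)))))

instance : IsMarkovKernel kappa := by
  unfold kappa
  infer_instance

lemma kappa_apply (x : ℝ) : kappa x =
    if x ≤ 1 then (unif 0 1).prod (unif 0 1)
    else if x ≤ 2 then (unif 2 3).prod (unif 2 3)
    else if x ≤ 3 then (unif 0 1).prod (unif 2 3)
    else (unif 2 3).prod (unif 0 1) := by
  unfold kappa
  simp [Kernel.piecewise_apply, Set.mem_Iic]

/-! ### Projections of triple products -/

lemma map_proj12 (p q t : Measure ℝ) [SFinite p] [SFinite q] [IsProbabilityMeasure t] :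
    (p.prod (q.prod t)).map (fun z : ℝ×ℝ×ℝ => (z.1, z.2.1)) = p.prod q := by
  have h : (fun z : ℝ×ℝ×ℝ => (z.1, z.2.1)) = Prod.map (id : ℝ → ℝ) Prod.fst := rfl
  rw [h, ← Measure.map_prod_map _ _ measurable_id measurable_fst, Measure.map_fst_prod,
    measure_univ, one_smul, Measure.map_id]

lemma map_proj3 (p q t : Measure ℝ) [IsProbabilityMeasure p] [IsProbabilityMeasure q]
    [SFinite t] :
    (p.prod (q.prod t)).map (fun z : ℝ×ℝ×ℝ => z.2.2) = t := by
  have h : (fun z : ℝ×ℝ×ℝ => z.2.2) =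
      (Prod.snd : ℝ×ℝ → ℝ) ∘ (Prod.snd : ℝ×(ℝ×ℝ) → ℝ×ℝ) := rfl
  rw [h, ← Measure.map_map measurable_snd measurable_snd, Measure.map_snd_prod, measure_univ,
    one_smul, Measure.map_snd_prod, measure_univ, one_smul]

lemma set_S_eq (C : Set ℝ) :
    {z : ℝ×ℝ×ℝ | z.2.2 ∈ C} = Set.univ ×ˢ (Set.univ ×ˢ C) := by
  ext z; simp [Set.mem_prod]

lemma triple_restrict (p q t : Measure ℝ) [SFinite p] [SFinite q] [SFinite t] (C : Set ℝ) :
    (p.prod (q.prod t)).restrict (Set.univ ×ˢ (Set.univ ×ˢ C)) =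
      p.prod (q.prod (t.restrict C)) := by
  rw [← Measure.prod_restrict, ← Measure.prod_restrict, Measure.restrict_univ,
    Measure.restrict_univ]

lemma triple_S_apply (p q t : Measure ℝ) [IsProbabilityMeasure p] [IsProbabilityMeasure q]
    [SFinite t] (C : Set ℝ) :
    (p.prod (q.prod t)) (Set.univ ×ˢ (Set.univ ×ˢ C)) = t C := by
  rw [Measure.prod_prod, Measure.prod_prod, measure_univ, measure_univ, one_mul, one_mul]

lemma triple_BC (p q t : Measure ℝ) [SFinite p] [SFinite q] [SFinite t]
    (B : Set (ℝ×ℝ)) (C : Set ℝ) (hB : MeasurableSet B) (hC : MeasurableSet C) :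
    (p.prod (q.prod t)) {z : ℝ×ℝ×ℝ | (z.1, z.2.1) ∈ B ∧ z.2.2 ∈ C} = (p.prod q) B * t C := by
  have hmeasS : MeasurableSet {z : ℝ×ℝ×ℝ | (z.1, z.2.1) ∈ B ∧ z.2.2 ∈ C} := by
    exact ((measurable_fst.prodMk (measurable_fst.comp measurable_snd)) hB).inter
      ((measurable_snd.comp measurable_snd) hC)
  rw [← (measurePreserving_prodAssoc p q t).map_eq,
    Measure.map_apply MeasurableEquiv.prodAssoc.measurable hmeasS]
  have hpre : (MeasurableEquiv.prodAssoc : (ℝ×ℝ)×ℝ ≃ᵐ ℝ×ℝ×ℝ) ⁻¹'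
      {z : ℝ×ℝ×ℝ | (z.1, z.2.1) ∈ B ∧ z.2.2 ∈ C} = B ×ˢ C := by
    ext ⟨⟨a, b⟩, c⟩
    simp [MeasurableEquiv.prodAssoc, Equiv.prodAssoc, Set.mem_prod]
  rw [hpre, Measure.prod_prod]

/-! ### Decomposition of the uniform law on [0,4] -/

lemma unif04 : unif 0 4 = (4 : ℝ≥0∞)⁻¹ • (volume : Measure ℝ).restrict (Set.Icc 0 4) := by
  unfold CondKT.unif ProbabilityTheory.cond
  rw [Real.volume_Icc]
  norm_num

lemma restrict_union' {s u : Set ℝ} (hdisj : Disjoint s u) (hu : MeasurableSet u) :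
    (volume : Measure ℝ).restrict (s ∪ u) = volume.restrict s + volume.restrict u :=
  Measure.restrict_union hdisj hu

lemma decomp04 : (volume : Measure ℝ).restrict (Set.Icc (0:ℝ) 4) = t1 + t2 + t3 + t4 := by
  unfold t1 t2 t3 t4
  have h3 : Set.Icc (0:ℝ) 3 ∪ Set.Ioc 3 4 = Set.Icc 0 4 :=
    Set.Icc_union_Ioc_eq_Icc (by norm_num) (by norm_num)
  have h2 : Set.Icc (0:ℝ) 2 ∪ Set.Ioc 2 3 = Set.Icc 0 3 :=
    Set.Icc_union_Ioc_eq_Icc (by norm_num) (by norm_num)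
  have h1 : Set.Icc (0:ℝ) 1 ∪ Set.Ioc 1 2 = Set.Icc 0 2 :=
    Set.Icc_union_Ioc_eq_Icc (by norm_num) (by norm_num)
  have d3 : Disjoint (Set.Icc (0:ℝ) 3) (Set.Ioc 3 4) := by
    rw [Set.disjoint_left]; rintro x ⟨_, hx2⟩ ⟨hx3, _⟩; linarith
  have d2 : Disjoint (Set.Icc (0:ℝ) 2) (Set.Ioc 2 3) := by
    rw [Set.disjoint_left]; rintro x ⟨_, hx2⟩ ⟨hx3, _⟩; linarith
  have d1 : Disjoint (Set.Icc (0:ℝ) 1) (Set.Ioc 1 2) := by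
    rw [Set.disjoint_left]; rintro x ⟨_, hx2⟩ ⟨hx3, _⟩; linarith
  rw [← h3, restrict_union' d3 measurableSet_Ioc, ← h2, restrict_union' d2 measurableSet_Ioc,
    ← h1, restrict_union' d1 measurableSet_Ioc]

end CEx
namespace CEx

open scoped ENNReal

/-! ### ENNReal arithmetic helpers -/

lemma four_inv : (4 : ℝ≥0∞)⁻¹ = 2⁻¹ * 2⁻¹ := by
  rw [show (4:ℝ≥0∞) = 2*2 by norm_num,
    ENNReal.mul_inv (Or.inl (by norm_num)) (Or.inl (by norm_num))]

lemma coeff_eq : ((2⁻¹ * 2⁻¹ : ℝ≥0∞))⁻¹ * 4⁻¹ * 4⁻¹ = 4⁻¹ := by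
  rw [← four_inv, inv_inv, ENNReal.mul_inv_cancel (by norm_num) (by norm_num), one_mul]

lemma half_val : (4:ℝ≥0∞)⁻¹ * (1 + 1 + (0 + 0)) = 2⁻¹ := by
  rw [show (1 + 1 + (0 + 0) : ℝ≥0∞) = 2 by norm_num, four_inv, mul_assoc,
    ENNReal.inv_mul_cancel (by norm_num) (by norm_num), mul_one]

/-! ### Cross rectangles -/

lemma cross_full (μa μb μc μd : Measure ℝ)
    [IsProbabilityMeasure μa] [IsProbabilityMeasure μb]
    [IsProbabilityMeasure μc] [IsProbabilityMeasure μd]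
    (sa sb sc sd : Set ℝ) (ha : μa sa = 1) (hb : μb sb = 1) (hc : μc sc = 1) (hd : μd sd = 1)
    (hma : MeasurableSet sa) (hmb : MeasurableSet sb) (hmc : MeasurableSet sc)
    (hmd : MeasurableSet sd)
    (hord : ∀ a ∈ sa, ∀ b ∈ sb, ∀ c ∈ sc, ∀ d ∈ sd, 0 < (a - c) * (b - d)) :
    ((μa.prod μb).prod (μc.prod μd))
        {q : (ℝ×ℝ)×(ℝ×ℝ) | 0 < (q.1.1 - q.2.1) * (q.1.2 - q.2.2)} = 1 ∧
    ((μa.prod μb).prod (μc.prod μd))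
        {q : (ℝ×ℝ)×(ℝ×ℝ) | (q.1.1 - q.2.1) * (q.1.2 - q.2.2) < 0} = 0 := by
  have hR : ((μa.prod μb).prod (μc.prod μd)) ((sa ×ˢ sb) ×ˢ (sc ×ˢ sd)) = 1 := by
    rw [Measure.prod_prod, Measure.prod_prod, Measure.prod_prod, ha, hb, hc, hd]
    norm_num
  have hmR : MeasurableSet ((sa ×ˢ sb) ×ˢ (sc ×ˢ sd)) := ((hma.prod hmb).prod (hmc.prod hmd))
  constructor
  · refine meas_full _ hR ?_
    rintro ⟨⟨a, b⟩, ⟨c, d⟩⟩ ⟨⟨ha', hb'⟩, ⟨hc', hd'⟩⟩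
    exact hord a ha' b hb' c hc' d hd'
  · refine meas_null _ hR hmR ?_
    rintro ⟨⟨a, b⟩, ⟨c, d⟩⟩ ⟨⟨ha', hb'⟩, ⟨hc', hd'⟩⟩ hlt
    have := hord a ha' b hb' c hc' d hd'
    simp only [Set.mem_setOf_eq] at hlt
    linarith

lemma cross_null (μa μb μc μd : Measure ℝ)
    [IsProbabilityMeasure μa] [IsProbabilityMeasure μb]
    [IsProbabilityMeasure μc] [IsProbabilityMeasure μd]
    (sa sb sc sd : Set ℝ) (ha : μa sa = 1) (hb : μb sb = 1) (hc : μc sc = 1) (hd : μd sd = 1)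
    (hma : MeasurableSet sa) (hmb : MeasurableSet sb) (hmc : MeasurableSet sc)
    (hmd : MeasurableSet sd)
    (hord : ∀ a ∈ sa, ∀ b ∈ sb, ∀ c ∈ sc, ∀ d ∈ sd, (a - c) * (b - d) < 0) :
    ((μa.prod μb).prod (μc.prod μd))
        {q : (ℝ×ℝ)×(ℝ×ℝ) | (q.1.1 - q.2.1) * (q.1.2 - q.2.2) < 0} = 1 ∧
    ((μa.prod μb).prod (μc.prod μd))
        {q : (ℝ×ℝ)×(ℝ×ℝ) | 0 < (q.1.1 - q.2.1) * (q.1.2 - q.2.2)} = 0 := by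
  have hR : ((μa.prod μb).prod (μc.prod μd)) ((sa ×ˢ sb) ×ˢ (sc ×ˢ sd)) = 1 := by
    rw [Measure.prod_prod, Measure.prod_prod, Measure.prod_prod, ha, hb, hc, hd]
    norm_num
  have hmR : MeasurableSet ((sa ×ˢ sb) ×ˢ (sc ×ˢ sd)) := ((hma.prod hmb).prod (hmc.prod hmd))
  constructor
  · refine meas_full _ hR ?_
    rintro ⟨⟨a, b⟩, ⟨c, d⟩⟩ ⟨⟨ha', hb'⟩, ⟨hc', hd'⟩⟩
    exact hord a ha' b hb' c hc' d hd'
  · refine meas_null _ hR hmR ?_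
    rintro ⟨⟨a, b⟩, ⟨c, d⟩⟩ ⟨⟨ha', hb'⟩, ⟨hc', hd'⟩⟩ hlt
    have := hord a ha' b hb' c hc' d hd'
    simp only [Set.mem_setOf_eq] at hlt
    linarith

lemma restrict_Icc_self (a b : ℝ) (h : b - a = 1) :
    (volume : Measure ℝ).restrict (Set.Icc a b) (Set.Icc a b) = 1 := by
  rw [Measure.restrict_apply_self, Real.volume_Icc, h, ENNReal.ofReal_one]

/-! ### Projection of a pair of triples to the first two coordinates -/

lemma pair_apply (p q t p' q' t' : Measure ℝ)
    [IsProbabilityMeasure p] [IsProbabilityMeasure q] [IsProbabilityMeasure t]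
    [IsProbabilityMeasure p'] [IsProbabilityMeasure q'] [IsProbabilityMeasure t']
    (T : Set ((ℝ×ℝ)×(ℝ×ℝ))) (hT : MeasurableSet T) :
    ((p.prod (q.prod t)).prod (p'.prod (q'.prod t')))
      (Prod.map (fun z : ℝ×ℝ×ℝ => (z.1, z.2.1)) (fun z : ℝ×ℝ×ℝ => (z.1, z.2.1)) ⁻¹' T) =
    ((p.prod q).prod (p'.prod q')) T := by
  have hf3 : Measurable (fun z : ℝ×ℝ×ℝ => (z.1, z.2.1)) :=
    measurable_fst.prodMk (measurable_fst.comp measurable_snd)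
  rw [← Measure.map_apply (hf3.prodMap hf3) hT,
    ← Measure.map_prod_map _ _ hf3 hf3, map_proj12, map_proj12]

end CEx
namespace CEx

open scoped ENNReal

lemma four_inv_two : (4 : ℝ≥0∞)⁻¹ * 2 = 2⁻¹ := by
  rw [four_inv, mul_assoc, ENNReal.inv_mul_cancel (by norm_num) (by norm_num), mul_one]

lemma cond_pair (νa νb : Measure (ℝ×ℝ×ℝ)) [IsProbabilityMeasure νa] [IsProbabilityMeasure νb]
    (S : Set (ℝ×ℝ×ℝ)) (hS : mubig S = 2⁻¹)
    (hres : mubig.restrict S = (4:ℝ≥0∞)⁻¹ • (νa + νb)) :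
    (mubig.prod mubig)[|S ×ˢ S] =
      (4:ℝ≥0∞)⁻¹ • (νa.prod νa + νb.prod νa + (νa.prod νb + νb.prod νb)) := by
  unfold ProbabilityTheory.cond
  rw [Measure.prod_prod, hS, ← Measure.prod_restrict, hres,
    smul_prod' _ _ _, prod_smul' _ _ _ (by norm_num), smul_smul, smul_smul, coeff_eq,
    Measure.prod_add, Measure.add_prod, Measure.add_prod]

lemma sckt_A : sCKT mubig (Set.Icc 0 2) = 1/2 := by
  have hC : MeasurableSet (Set.Icc (0:ℝ) 2) := measurableSet_Icc
  have hsub1 : Set.Icc (0:ℝ) 1 ⊆ Set.Icc 0 2 := Set.Icc_subset_Icc (le_refl 0) (by norm_num)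
  have hsub2 : Set.Ioc (1:ℝ) 2 ⊆ Set.Icc 0 2 := fun x hx => ⟨by linarith [hx.1], hx.2⟩
  have hi1 : Set.Icc (0:ℝ) 2 ∩ Set.Icc 0 1 = Set.Icc 0 1 :=
    Set.inter_eq_self_of_subset_right hsub1
  have hi2 : Set.Icc (0:ℝ) 2 ∩ Set.Ioc 1 2 = Set.Ioc 1 2 :=
    Set.inter_eq_self_of_subset_right hsub2
  have hi3 : Set.Icc (0:ℝ) 2 ∩ Set.Ioc 2 3 = ∅ := by
    rw [Set.eq_empty_iff_forall_notMem]; rintro x ⟨⟨_, h2⟩, ⟨h3, _⟩⟩; linarith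
  have hi4 : Set.Icc (0:ℝ) 2 ∩ Set.Ioc 3 4 = ∅ := by
    rw [Set.eq_empty_iff_forall_notMem]; rintro x ⟨⟨_, h2⟩, ⟨h3, _⟩⟩; linarith
  have h1 : t1 (Set.Icc (0:ℝ) 2) = 1 := by
    rw [t1, Measure.restrict_apply hC, hi1, Real.volume_Icc]; norm_num
  have h2 : t2 (Set.Icc (0:ℝ) 2) = 1 := by
    rw [t2, Measure.restrict_apply hC, hi2, Real.volume_Ioc]; norm_num
  have h3 : t3 (Set.Icc (0:ℝ) 2) = 0 := by
    rw [t3, Measure.restrict_apply hC, hi3, measure_empty]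
  have h4 : t4 (Set.Icc (0:ℝ) 2) = 0 := by
    rw [t4, Measure.restrict_apply hC, hi4, measure_empty]
  have hS : mubig {z : ℝ×ℝ×ℝ | z.2.2 ∈ Set.Icc (0:ℝ) 2} = 2⁻¹ := by
    rw [set_S_eq]
    simp only [mubig, Measure.smul_apply, Measure.add_apply, smul_eq_mul, nu1, nu2, nu3, nu4]
    rw [triple_S_apply, triple_S_apply, triple_S_apply, triple_S_apply, h1, h2, h3, h4,
      show ((1:ℝ≥0∞) + 1 + 0 + 0) = 2 by norm_num, four_inv_two]
  have hres : mubig.restrict {z : ℝ×ℝ×ℝ | z.2.2 ∈ Set.Icc (0:ℝ) 2} =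
      (4:ℝ≥0∞)⁻¹ • (nu1 + nu2) := by
    rw [set_S_eq]
    simp only [mubig, Measure.restrict_smul, Measure.restrict_add, nu1, nu2, nu3, nu4]
    rw [triple_restrict, triple_restrict, triple_restrict, triple_restrict]
    have r1 : t1.restrict (Set.Icc (0:ℝ) 2) = t1 := by
      rw [t1, Measure.restrict_restrict hC, hi1]
    have r2 : t2.restrict (Set.Icc (0:ℝ) 2) = t2 := by
      rw [t2, Measure.restrict_restrict hC, hi2]
    have r3 : t3.restrict (Set.Icc (0:ℝ) 2) = 0 := by
      rw [t3, Measure.restrict_restrict hC, hi3, Measure.restrict_empty]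
    have r4 : t4.restrict (Set.Icc (0:ℝ) 2) = 0 := by
      rw [t4, Measure.restrict_restrict hC, hi4, Measure.restrict_empty]
    rw [r1, r2, r3, r4]
    simp only [Measure.prod_zero, add_zero]
  have hE : {q : (ℝ×ℝ×ℝ)×(ℝ×ℝ×ℝ) | q.1.2.2 ∈ Set.Icc (0:ℝ) 2 ∧ q.2.2.2 ∈ Set.Icc (0:ℝ) 2} =
      {z : ℝ×ℝ×ℝ | z.2.2 ∈ Set.Icc (0:ℝ) 2} ×ˢ {z : ℝ×ℝ×ℝ | z.2.2 ∈ Set.Icc (0:ℝ) 2} := rfl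
  have hcond := cond_pair nu1 nu2 _ hS hres
  -- values of the four product measures on conc/disc sets
  have v11c : (nu1.prod nu1) {q : (ℝ×ℝ×ℝ)×(ℝ×ℝ×ℝ) | 0 < (q.1.1 - q.2.1) * (q.1.2.1 - q.2.2.1)} =
      ((m01.prod m01).prod (m01.prod m01))
        {q : (ℝ×ℝ)×(ℝ×ℝ) | 0 < (q.1.1 - q.2.1) * (q.1.2 - q.2.2)} :=
    pair_apply _ _ _ _ _ _ _ measurableSet_conc
  have v11d : (nu1.prod nu1) {q : (ℝ×ℝ×ℝ)×(ℝ×ℝ×ℝ) | (q.1.1 - q.2.1) * (q.1.2.1 - q.2.2.1) < 0} =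
      ((m01.prod m01).prod (m01.prod m01))
        {q : (ℝ×ℝ)×(ℝ×ℝ) | (q.1.1 - q.2.1) * (q.1.2 - q.2.2) < 0} :=
    pair_apply _ _ _ _ _ _ _ measurableSet_disc
  have v22c : (nu2.prod nu2) {q : (ℝ×ℝ×ℝ)×(ℝ×ℝ×ℝ) | 0 < (q.1.1 - q.2.1) * (q.1.2.1 - q.2.2.1)} =
      ((m23.prod m23).prod (m23.prod m23))
        {q : (ℝ×ℝ)×(ℝ×ℝ) | 0 < (q.1.1 - q.2.1) * (q.1.2 - q.2.2)} :=
    pair_apply _ _ _ _ _ _ _ measurableSet_conc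
  have v22d : (nu2.prod nu2) {q : (ℝ×ℝ×ℝ)×(ℝ×ℝ×ℝ) | (q.1.1 - q.2.1) * (q.1.2.1 - q.2.2.1) < 0} =
      ((m23.prod m23).prod (m23.prod m23))
        {q : (ℝ×ℝ)×(ℝ×ℝ) | (q.1.1 - q.2.1) * (q.1.2 - q.2.2) < 0} :=
    pair_apply _ _ _ _ _ _ _ measurableSet_disc
  have v12c : (nu1.prod nu2) {q : (ℝ×ℝ×ℝ)×(ℝ×ℝ×ℝ) | 0 < (q.1.1 - q.2.1) * (q.1.2.1 - q.2.2.1)} =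
      ((m01.prod m01).prod (m23.prod m23))
        {q : (ℝ×ℝ)×(ℝ×ℝ) | 0 < (q.1.1 - q.2.1) * (q.1.2 - q.2.2)} :=
    pair_apply _ _ _ _ _ _ _ measurableSet_conc
  have v12d : (nu1.prod nu2) {q : (ℝ×ℝ×ℝ)×(ℝ×ℝ×ℝ) | (q.1.1 - q.2.1) * (q.1.2.1 - q.2.2.1) < 0} =
      ((m01.prod m01).prod (m23.prod m23))
        {q : (ℝ×ℝ)×(ℝ×ℝ) | (q.1.1 - q.2.1) * (q.1.2 - q.2.2) < 0} :=
    pair_apply _ _ _ _ _ _ _ measurableSet_disc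
  have v21c : (nu2.prod nu1) {q : (ℝ×ℝ×ℝ)×(ℝ×ℝ×ℝ) | 0 < (q.1.1 - q.2.1) * (q.1.2.1 - q.2.2.1)} =
      ((m23.prod m23).prod (m01.prod m01))
        {q : (ℝ×ℝ)×(ℝ×ℝ) | 0 < (q.1.1 - q.2.1) * (q.1.2 - q.2.2)} :=
    pair_apply _ _ _ _ _ _ _ measurableSet_conc
  have v21d : (nu2.prod nu1) {q : (ℝ×ℝ×ℝ)×(ℝ×ℝ×ℝ) | (q.1.1 - q.2.1) * (q.1.2.1 - q.2.2.1) < 0} =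
      ((m23.prod m23).prod (m01.prod m01))
        {q : (ℝ×ℝ)×(ℝ×ℝ) | (q.1.1 - q.2.1) * (q.1.2 - q.2.2) < 0} :=
    pair_apply _ _ _ _ _ _ _ measurableSet_disc
  have hm01 : m01 (Set.Icc (0:ℝ) 1) = 1 := restrict_Icc_self 0 1 (by norm_num)
  have hm23 : m23 (Set.Icc (2:ℝ) 3) = 1 := restrict_Icc_self 2 3 (by norm_num)
  have cross12 := cross_full m01 m01 m23 m23 (Set.Icc 0 1) (Set.Icc 0 1) (Set.Icc 2 3)
    (Set.Icc 2 3) hm01 hm01 hm23 hm23 measurableSet_Icc measurableSet_Icc measurableSet_Icc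
    measurableSet_Icc (by
      rintro a ⟨_, ha2⟩ b ⟨_, hb2⟩ c ⟨hc1, _⟩ d ⟨hd1, _⟩
      have : a - c < 0 := by linarith
      have : b - d < 0 := by linarith
      nlinarith)
  have cross21 := cross_full m23 m23 m01 m01 (Set.Icc 2 3) (Set.Icc 2 3) (Set.Icc 0 1)
    (Set.Icc 0 1) hm23 hm23 hm01 hm01 measurableSet_Icc measurableSet_Icc measurableSet_Icc
    measurableSet_Icc (by
      rintro a ⟨ha1, _⟩ b ⟨hb1, _⟩ c ⟨_, hc2⟩ d ⟨_, hd2⟩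
      have : 0 < a - c := by linarith
      have : 0 < b - d := by linarith
      nlinarith)
  have hsym11 := conc_eq_disc m01 m01
  have hsym22 := conc_eq_disc m23 m23
  unfold CondKT.sCKT
  rw [hE, hcond]
  simp only [Measure.smul_apply, Measure.add_apply, smul_eq_mul]
  rw [v11c, v11d, v22c, v22d, v12c, v12d, v21c, v21d, cross12.1, cross12.2, cross21.1,
    cross21.2, ← hsym11, ← hsym22]
  set c1 := ((m01.prod m01).prod (m01.prod m01))
    {q : (ℝ×ℝ)×(ℝ×ℝ) | 0 < (q.1.1 - q.2.1) * (q.1.2 - q.2.2)} with hc1def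
  set c2 := ((m23.prod m23).prod (m23.prod m23))
    {q : (ℝ×ℝ)×(ℝ×ℝ) | 0 < (q.1.1 - q.2.1) * (q.1.2 - q.2.2)} with hc2def
  have hc1 : c1 ≠ ⊤ := measure_ne_top _ _
  have hc2 : c2 ≠ ⊤ := measure_ne_top _ _
  have hfin1 : (4:ℝ≥0∞)⁻¹ * (c1 + c2) ≠ ⊤ :=
    ENNReal.mul_ne_top (by norm_num) (ENNReal.add_ne_top.mpr ⟨hc1, hc2⟩)
  have hfin2 : (4:ℝ≥0∞)⁻¹ * 2 ≠ ⊤ := by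
    rw [four_inv_two]; norm_num
  have h2r : ((2:ℝ≥0∞)⁻¹).toReal = 1/2 := by simp
  rw [show c1 + 1 + (1 + c2) = (c1 + c2) + 2 by ring,
    show c1 + 0 + (0 + c2) = c1 + c2 by ring, mul_add,
    ENNReal.toReal_add hfin1 hfin2, four_inv_two, h2r]
  ring

end CEx
namespace CEx

open scoped ENNReal

lemma sckt_B : sCKT mubig (Set.Ioc 2 4) = -(1/2) := by
  have hC : MeasurableSet (Set.Ioc (2:ℝ) 4) := measurableSet_Ioc
  have hi1 : Set.Ioc (2:ℝ) 4 ∩ Set.Icc 0 1 = ∅ := by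
    rw [Set.eq_empty_iff_forall_notMem]; rintro x ⟨⟨h1, _⟩, ⟨_, h2⟩⟩; linarith
  have hi2 : Set.Ioc (2:ℝ) 4 ∩ Set.Ioc 1 2 = ∅ := by
    rw [Set.eq_empty_iff_forall_notMem]; rintro x ⟨⟨h1, _⟩, ⟨_, h2⟩⟩; linarith
  have hi3 : Set.Ioc (2:ℝ) 4 ∩ Set.Ioc 2 3 = Set.Ioc 2 3 :=
    Set.inter_eq_self_of_subset_right (fun x hx => ⟨hx.1, by linarith [hx.2]⟩)
  have hi4 : Set.Ioc (2:ℝ) 4 ∩ Set.Ioc 3 4 = Set.Ioc 3 4 :=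
    Set.inter_eq_self_of_subset_right (fun x hx => ⟨by linarith [hx.1], hx.2⟩)
  have h1 : t1 (Set.Ioc (2:ℝ) 4) = 0 := by
    rw [t1, Measure.restrict_apply hC, hi1, measure_empty]
  have h2 : t2 (Set.Ioc (2:ℝ) 4) = 0 := by
    rw [t2, Measure.restrict_apply hC, hi2, measure_empty]
  have h3 : t3 (Set.Ioc (2:ℝ) 4) = 1 := by
    rw [t3, Measure.restrict_apply hC, hi3, Real.volume_Ioc]; norm_num
  have h4 : t4 (Set.Ioc (2:ℝ) 4) = 1 := by
    rw [t4, Measure.restrict_apply hC, hi4, Real.volume_Ioc]; norm_num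
  have hS : mubig {z : ℝ×ℝ×ℝ | z.2.2 ∈ Set.Ioc (2:ℝ) 4} = 2⁻¹ := by
    rw [set_S_eq]
    simp only [mubig, Measure.smul_apply, Measure.add_apply, smul_eq_mul, nu1, nu2, nu3, nu4]
    rw [triple_S_apply, triple_S_apply, triple_S_apply, triple_S_apply, h1, h2, h3, h4,
      show ((0:ℝ≥0∞) + 0 + 1 + 1) = 2 by norm_num, four_inv_two]
  have hres : mubig.restrict {z : ℝ×ℝ×ℝ | z.2.2 ∈ Set.Ioc (2:ℝ) 4} =
      (4:ℝ≥0∞)⁻¹ • (nu3 + nu4) := by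
    rw [set_S_eq]
    simp only [mubig, Measure.restrict_smul, Measure.restrict_add, nu1, nu2, nu3, nu4]
    rw [triple_restrict, triple_restrict, triple_restrict, triple_restrict]
    have r1 : t1.restrict (Set.Ioc (2:ℝ) 4) = 0 := by
      rw [t1, Measure.restrict_restrict hC, hi1, Measure.restrict_empty]
    have r2 : t2.restrict (Set.Ioc (2:ℝ) 4) = 0 := by
      rw [t2, Measure.restrict_restrict hC, hi2, Measure.restrict_empty]
    have r3 : t3.restrict (Set.Ioc (2:ℝ) 4) = t3 := by
      rw [t3, Measure.restrict_restrict hC, hi3]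
    have r4 : t4.restrict (Set.Ioc (2:ℝ) 4) = t4 := by
      rw [t4, Measure.restrict_restrict hC, hi4]
    rw [r1, r2, r3, r4]
    simp only [Measure.prod_zero, zero_add]
  have hE : {q : (ℝ×ℝ×ℝ)×(ℝ×ℝ×ℝ) | q.1.2.2 ∈ Set.Ioc (2:ℝ) 4 ∧ q.2.2.2 ∈ Set.Ioc (2:ℝ) 4} =
      {z : ℝ×ℝ×ℝ | z.2.2 ∈ Set.Ioc (2:ℝ) 4} ×ˢ {z : ℝ×ℝ×ℝ | z.2.2 ∈ Set.Ioc (2:ℝ) 4} := rfl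
  have hcond := cond_pair nu3 nu4 _ hS hres
  have v33c : (nu3.prod nu3) {q : (ℝ×ℝ×ℝ)×(ℝ×ℝ×ℝ) | 0 < (q.1.1 - q.2.1) * (q.1.2.1 - q.2.2.1)} =
      ((m01.prod m23).prod (m01.prod m23))
        {q : (ℝ×ℝ)×(ℝ×ℝ) | 0 < (q.1.1 - q.2.1) * (q.1.2 - q.2.2)} :=
    pair_apply _ _ _ _ _ _ _ measurableSet_conc
  have v33d : (nu3.prod nu3) {q : (ℝ×ℝ×ℝ)×(ℝ×ℝ×ℝ) | (q.1.1 - q.2.1) * (q.1.2.1 - q.2.2.1) < 0} =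
      ((m01.prod m23).prod (m01.prod m23))
        {q : (ℝ×ℝ)×(ℝ×ℝ) | (q.1.1 - q.2.1) * (q.1.2 - q.2.2) < 0} :=
    pair_apply _ _ _ _ _ _ _ measurableSet_disc
  have v44c : (nu4.prod nu4) {q : (ℝ×ℝ×ℝ)×(ℝ×ℝ×ℝ) | 0 < (q.1.1 - q.2.1) * (q.1.2.1 - q.2.2.1)} =
      ((m23.prod m01).prod (m23.prod m01))
        {q : (ℝ×ℝ)×(ℝ×ℝ) | 0 < (q.1.1 - q.2.1) * (q.1.2 - q.2.2)} :=
    pair_apply _ _ _ _ _ _ _ measurableSet_conc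
  have v44d : (nu4.prod nu4) {q : (ℝ×ℝ×ℝ)×(ℝ×ℝ×ℝ) | (q.1.1 - q.2.1) * (q.1.2.1 - q.2.2.1) < 0} =
      ((m23.prod m01).prod (m23.prod m01))
        {q : (ℝ×ℝ)×(ℝ×ℝ) | (q.1.1 - q.2.1) * (q.1.2 - q.2.2) < 0} :=
    pair_apply _ _ _ _ _ _ _ measurableSet_disc
  have v34c : (nu3.prod nu4) {q : (ℝ×ℝ×ℝ)×(ℝ×ℝ×ℝ) | 0 < (q.1.1 - q.2.1) * (q.1.2.1 - q.2.2.1)} =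
      ((m01.prod m23).prod (m23.prod m01))
        {q : (ℝ×ℝ)×(ℝ×ℝ) | 0 < (q.1.1 - q.2.1) * (q.1.2 - q.2.2)} :=
    pair_apply _ _ _ _ _ _ _ measurableSet_conc
  have v34d : (nu3.prod nu4) {q : (ℝ×ℝ×ℝ)×(ℝ×ℝ×ℝ) | (q.1.1 - q.2.1) * (q.1.2.1 - q.2.2.1) < 0} =
      ((m01.prod m23).prod (m23.prod m01))
        {q : (ℝ×ℝ)×(ℝ×ℝ) | (q.1.1 - q.2.1) * (q.1.2 - q.2.2) < 0} :=
    pair_apply _ _ _ _ _ _ _ measurableSet_disc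
  have v43c : (nu4.prod nu3) {q : (ℝ×ℝ×ℝ)×(ℝ×ℝ×ℝ) | 0 < (q.1.1 - q.2.1) * (q.1.2.1 - q.2.2.1)} =
      ((m23.prod m01).prod (m01.prod m23))
        {q : (ℝ×ℝ)×(ℝ×ℝ) | 0 < (q.1.1 - q.2.1) * (q.1.2 - q.2.2)} :=
    pair_apply _ _ _ _ _ _ _ measurableSet_conc
  have v43d : (nu4.prod nu3) {q : (ℝ×ℝ×ℝ)×(ℝ×ℝ×ℝ) | (q.1.1 - q.2.1) * (q.1.2.1 - q.2.2.1) < 0} =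
      ((m23.prod m01).prod (m01.prod m23))
        {q : (ℝ×ℝ)×(ℝ×ℝ) | (q.1.1 - q.2.1) * (q.1.2 - q.2.2) < 0} :=
    pair_apply _ _ _ _ _ _ _ measurableSet_disc
  have hm01 : m01 (Set.Icc (0:ℝ) 1) = 1 := restrict_Icc_self 0 1 (by norm_num)
  have hm23 : m23 (Set.Icc (2:ℝ) 3) = 1 := restrict_Icc_self 2 3 (by norm_num)
  have cross34 := cross_null m01 m23 m23 m01 (Set.Icc 0 1) (Set.Icc 2 3) (Set.Icc 2 3)
    (Set.Icc 0 1) hm01 hm23 hm23 hm01 measurableSet_Icc measurableSet_Icc measurableSet_Icc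
    measurableSet_Icc (by
      rintro a ⟨_, ha2⟩ b ⟨hb1, _⟩ c ⟨hc1, _⟩ d ⟨_, hd2⟩
      have h1 : a - c < 0 := by linarith
      have h2 : 0 < b - d := by linarith
      nlinarith)
  have cross43 := cross_null m23 m01 m01 m23 (Set.Icc 2 3) (Set.Icc 0 1) (Set.Icc 0 1)
    (Set.Icc 2 3) hm23 hm01 hm01 hm23 measurableSet_Icc measurableSet_Icc measurableSet_Icc
    measurableSet_Icc (by
      rintro a ⟨ha1, _⟩ b ⟨_, hb2⟩ c ⟨_, hc2⟩ d ⟨hd1, _⟩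
      have h1 : 0 < a - c := by linarith
      have h2 : b - d < 0 := by linarith
      nlinarith)
  have hsym33 := conc_eq_disc m01 m23
  have hsym44 := conc_eq_disc m23 m01
  unfold CondKT.sCKT
  rw [hE, hcond]
  simp only [Measure.smul_apply, Measure.add_apply, smul_eq_mul]
  rw [v33c, v33d, v44c, v44d, v34c, v34d, v43c, v43d, cross34.1, cross34.2, cross43.1,
    cross43.2, ← hsym33, ← hsym44]
  set c1 := ((m01.prod m23).prod (m01.prod m23))
    {q : (ℝ×ℝ)×(ℝ×ℝ) | 0 < (q.1.1 - q.2.1) * (q.1.2 - q.2.2)} with hc1def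
  set c2 := ((m23.prod m01).prod (m23.prod m01))
    {q : (ℝ×ℝ)×(ℝ×ℝ) | 0 < (q.1.1 - q.2.1) * (q.1.2 - q.2.2)} with hc2def
  have hc1 : c1 ≠ ⊤ := measure_ne_top _ _
  have hc2 : c2 ≠ ⊤ := measure_ne_top _ _
  have hfin1 : (4:ℝ≥0∞)⁻¹ * (c1 + c2) ≠ ⊤ :=
    ENNReal.mul_ne_top (by norm_num) (ENNReal.add_ne_top.mpr ⟨hc1, hc2⟩)
  have hfin2 : (4:ℝ≥0∞)⁻¹ * 2 ≠ ⊤ := by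
    rw [four_inv_two]; norm_num
  have h2r : ((2:ℝ≥0∞)⁻¹).toReal = 1/2 := by simp
  rw [show c1 + 0 + (0 + c2) = c1 + c2 by ring,
    show c1 + 1 + (1 + c2) = (c1 + c2) + 2 by ring, mul_add (4:ℝ≥0∞)⁻¹ (c1+c2) 2,
    ENNReal.toReal_add hfin1 hfin2, four_inv_two, h2r]
  ring

end CEx

/-- **First counter-example:** a trivariate random vector whose pointwise conditional
Kendall's tau is constant (equal to 0), while its subset-conditional Kendall's tau is not
constant (being `1/2` given `X₃ ∈ [0,2]` and `-1/2` given `X₃ ∈ (2,4]`). The regular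
conditional distribution of `(X₁, X₂)` given `X₃` is given by the kernel `κ`. -/
theorem stmt13 :
    ∃ (Ω : Type) (_ : MeasurableSpace Ω) (P : Measure Ω) (X : Ω → ℝ × ℝ × ℝ)
      (κ : ProbabilityTheory.Kernel ℝ (ℝ × ℝ)),
      IsProbabilityMeasure P ∧ Measurable X ∧ IsMarkovKernel κ ∧
      -- `X₃` is uniform on `[0, 4]`
      P.map (fun ω => (X ω).2.2) = unif 0 4 ∧
      -- `κ` is a regular conditional distribution of `(X₁, X₂)` given `X₃`
      (∀ (B : Set (ℝ × ℝ)) (C : Set ℝ), MeasurableSet B → MeasurableSet C →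
        (P.map X) {z : ℝ × ℝ × ℝ | (z.1, z.2.1) ∈ B ∧ z.2.2 ∈ C} =
          ∫⁻ x in C, κ x B ∂(unif 0 4)) ∧
      -- the explicit conditional structure
      (∀ x ∈ Set.Icc (0 : ℝ) 1, κ x = (unif 0 1).prod (unif 0 1)) ∧
      (∀ x ∈ Set.Ioc (1 : ℝ) 2, κ x = (unif 2 3).prod (unif 2 3)) ∧
      (∀ x ∈ Set.Ioc (2 : ℝ) 3, κ x = (unif 0 1).prod (unif 2 3)) ∧
      (∀ x ∈ Set.Ioc (3 : ℝ) 4, κ x = (unif 2 3).prod (unif 0 1)) ∧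
      -- the pointwise conditional Kendall's tau vanishes everywhere
      (∀ x ∈ Set.Icc (0 : ℝ) 4, ktau2 (κ x) = 0) ∧
      -- while the subset-conditional Kendall's taus differ
      sCKT (P.map X) (Set.Icc 0 2) = 1 / 2 ∧
      sCKT (P.map X) (Set.Ioc 2 4) = -(1 / 2) := by
  classical
  refine ⟨ℝ × ℝ × ℝ, inferInstance, CEx.mubig, id, CEx.kappa, inferInstance, measurable_id,
    inferInstance, ?_, ?_, ?_, ?_, ?_, ?_, ?_, ?_, ?_⟩
  · -- the third marginal is uniform on [0,4]
    show CEx.mubig.map (fun z : ℝ × ℝ × ℝ => z.2.2) = unif 0 4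
    rw [CEx.unif04, CEx.decomp04]
    simp only [CEx.mubig, CEx.nu1, CEx.nu2, CEx.nu3, CEx.nu4]
    rw [Measure.map_smul,
      Measure.map_add _ _ (show Measurable (fun z : ℝ×ℝ×ℝ => z.2.2) by fun_prop),
      Measure.map_add _ _ (show Measurable (fun z : ℝ×ℝ×ℝ => z.2.2) by fun_prop),
      Measure.map_add _ _ (show Measurable (fun z : ℝ×ℝ×ℝ => z.2.2) by fun_prop),
      CEx.map_proj3, CEx.map_proj3, CEx.map_proj3, CEx.map_proj3]
  · -- disintegration
    intro B C hB hC
    rw [Measure.map_id]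
    have hLHS : CEx.mubig {z : ℝ×ℝ×ℝ | (z.1, z.2.1) ∈ B ∧ z.2.2 ∈ C} =
        4⁻¹ * ((CEx.m01.prod CEx.m01) B * CEx.t1 C + (CEx.m23.prod CEx.m23) B * CEx.t2 C +
          (CEx.m01.prod CEx.m23) B * CEx.t3 C + (CEx.m23.prod CEx.m01) B * CEx.t4 C) := by
      simp only [CEx.mubig, Measure.smul_apply, Measure.add_apply, smul_eq_mul,
        CEx.nu1, CEx.nu2, CEx.nu3, CEx.nu4]
      rw [CEx.triple_BC _ _ _ _ _ hB hC, CEx.triple_BC _ _ _ _ _ hB hC,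
        CEx.triple_BC _ _ _ _ _ hB hC, CEx.triple_BC _ _ _ _ _ hB hC]
    have p1 : ∫⁻ x, (CEx.kappa x) B ∂(CEx.t1.restrict C) =
        (CEx.m01.prod CEx.m01) B * CEx.t1 C := by
      rw [CEx.t1, Measure.restrict_restrict hC,
        setLIntegral_congr_fun (hC.inter measurableSet_Icc)
          (g := fun _ => ((CEx.m01.prod CEx.m01) B))
          (fun x hx => by
            rw [CEx.kappa_apply, if_pos hx.2.2, CEx.unif01]),
        setLIntegral_const, Measure.restrict_apply hC]
    have p2 : ∫⁻ x, (CEx.kappa x) B ∂(CEx.t2.restrict C) =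
        (CEx.m23.prod CEx.m23) B * CEx.t2 C := by
      rw [CEx.t2, Measure.restrict_restrict hC,
        setLIntegral_congr_fun (hC.inter measurableSet_Ioc)
          (g := fun _ => ((CEx.m23.prod CEx.m23) B))
          (fun x hx => by
            rw [CEx.kappa_apply, if_neg (not_le.mpr hx.2.1), if_pos hx.2.2, CEx.unif23]),
        setLIntegral_const, Measure.restrict_apply hC]
    have p3 : ∫⁻ x, (CEx.kappa x) B ∂(CEx.t3.restrict C) =
        (CEx.m01.prod CEx.m23) B * CEx.t3 C := by
      rw [CEx.t3, Measure.restrict_restrict hC,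
        setLIntegral_congr_fun (hC.inter measurableSet_Ioc)
          (g := fun _ => ((CEx.m01.prod CEx.m23) B))
          (fun x hx => by
            rw [CEx.kappa_apply, if_neg (not_le.mpr (by linarith [hx.2.1] : (1:ℝ) < x)),
              if_neg (not_le.mpr hx.2.1), if_pos hx.2.2, CEx.unif01, CEx.unif23]),
        setLIntegral_const, Measure.restrict_apply hC]
    have p4 : ∫⁻ x, (CEx.kappa x) B ∂(CEx.t4.restrict C) =
        (CEx.m23.prod CEx.m01) B * CEx.t4 C := by
      rw [CEx.t4, Measure.restrict_restrict hC,
        setLIntegral_congr_fun (hC.inter measurableSet_Ioc)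
          (g := fun _ => ((CEx.m23.prod CEx.m01) B))
          (fun x hx => by
            rw [CEx.kappa_apply, if_neg (not_le.mpr (by linarith [hx.2.1] : (1:ℝ) < x)),
              if_neg (not_le.mpr (by linarith [hx.2.1] : (2:ℝ) < x)),
              if_neg (not_le.mpr hx.2.1), CEx.unif01, CEx.unif23]),
        setLIntegral_const, Measure.restrict_apply hC]
    rw [hLHS, CEx.unif04, CEx.decomp04, Measure.restrict_smul, lintegral_smul_measure,
      Measure.restrict_add, Measure.restrict_add, Measure.restrict_add,
      lintegral_add_measure, lintegral_add_measure, lintegral_add_measure,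
      p1, p2, p3, p4, smul_eq_mul]
  · rintro x ⟨_, hx2⟩
    rw [CEx.kappa_apply, if_pos hx2]
  · rintro x ⟨hx1, hx2⟩
    rw [CEx.kappa_apply, if_neg (not_le.mpr hx1), if_pos hx2]
  · rintro x ⟨hx1, hx2⟩
    rw [CEx.kappa_apply, if_neg (not_le.mpr (by linarith : (1:ℝ) < x)),
      if_neg (not_le.mpr hx1), if_pos hx2]
  · rintro x ⟨hx1, hx2⟩
    rw [CEx.kappa_apply, if_neg (not_le.mpr (by linarith : (1:ℝ) < x)),
      if_neg (not_le.mpr (by linarith : (2:ℝ) < x)), if_neg (not_le.mpr hx1)]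
  · intro x _
    rw [CEx.kappa_apply]
    split_ifs <;> exact CEx.ktau2_prod _ _
  · rw [Measure.map_id]
    exact CEx.sckt_A
  · rw [Measure.map_id]
    exact CEx.sckt_B
end
end

section
/- There exists a trivariate random vector (X₁, X₂, X₃) — explicitly: X₃ uniform on [0,4]; given X₃ = x, (X₁, X₂) = (Φ(Z₁), Φ(Z₂)) where Φ is the standard normal c.d.f. and (Z₁, Z₂) is a centered bivariate Gaussian vector with unit variances and correlation ρ(x), with ρ(x) = 1/2 for x ∈ [0,1] ∪ (2,3] and ρ(x) = −1/2 for x ∈ (1,2] ∪ (3,4] — such that: (i) the conditional law of (X₁, X₂) given X₃ ∈ [0,2] equals the conditional law of (X₁, X₂) given X₃ ∈ (2,4] (both being the equal-weight mixture of the Gaussian copulas with correlations 1/2 and −1/2), so in particular τ_{1,2|X₃∈[0,2]} = τ_{1,2|X₃∈(2,4]}; and (ii) the map x ↦ τ_{1,2|X₃=x} is not constant, since τ_{1,2|X₃=x} > 0 for x ∈ [0,1] while τ_{1,2|X₃=x} < 0 for x ∈ (1,2]. Hence constancy of the subset-conditional Kendall's tau over the partition {[0,2], (2,4]} does not imply constancy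 of the pointwise conditional Kendall's tau. -/
/- Common framework: conditional Kendall's tau given discretized conditioning events.

An observation is a pair `(x_I, x_J) : (Fin p → ℝ) × (Fin dJ → ℝ)`, where `x_I` is the
conditioned vector and `x_J` the conditioning vector. -/

open MeasureTheory ProbabilityTheory Filter Finset
open scoped Topology Classical

noncomputable section

open CondKT

namespace CondKT

/-- The standard normal cumulative distribution function `Φ`. -/
def stdNormalCDF : ℝ → ℝ := fun t => ProbabilityTheory.cdf (gaussianReal 0 1) t

/-- A centered bivariate Gaussian distribution with unit variances and correlation `ρ`. -/
def biGauss (ρ : ℝ) : Measure (ℝ × ℝ) :=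
  ((gaussianReal 0 1).prod (gaussianReal 0 1)).map
    (fun z => (z.1, ρ * z.1 + Real.sqrt (1 - ρ ^ 2) * z.2))

/-- The bivariate Gaussian copula with correlation `ρ`, i.e. the law of `(Φ(Z₁), Φ(Z₂))`
for `(Z₁, Z₂)` centered Gaussian with unit variances and correlation `ρ`. -/
def gaussCopula (ρ : ℝ) : Measure (ℝ × ℝ) :=
  (biGauss ρ).map (fun z => (stdNormalCDF z.1, stdNormalCDF z.2))

end CondKT

open CondKT

namespace CExAux
open CondKT

def g : Measure ℝ := gaussianReal 0 1

instance : IsProbabilityMeasure g := by unfold g; infer_instance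

lemma g_singleton (x : ℝ) : g {x} = 0 :=
  gaussianReal_absolutelyContinuous 0 one_ne_zero Real.volume_singleton

lemma g_Ioo_pos {a b : ℝ} (hab : a < b) : 0 < g (Set.Ioo a b) := by
  rw [g, gaussianReal_apply 0 one_ne_zero]
  rw [pos_iff_ne_zero]
  intro h
  rw [lintegral_eq_zero_iff (measurable_gaussianPDF 0 1)] at h
  rw [Filter.EventuallyEq, ae_restrict_iff' measurableSet_Ioo] at h
  have h2 : ∀ᵐ x ∂(volume : Measure ℝ), x ∉ Set.Ioo a b := by
    filter_upwards [h] with x hx hmem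
    exact absurd (hx hmem) (gaussianPDF_pos 0 one_ne_zero x).ne'
  rw [ae_iff] at h2
  simp only [not_not] at h2
  rw [show {x | x ∈ Set.Ioo a b} = Set.Ioo a b from rfl, Real.volume_Ioo] at h2
  simp only [ENNReal.ofReal_eq_zero] at h2
  linarith

/-- law of the difference of two independent standard gaussians -/
def lamT : Measure ℝ := (g.prod g).map (fun q : ℝ × ℝ => q.1 - q.2)

instance : IsProbabilityMeasure lamT :=
  Measure.isProbabilityMeasure_map (by fun_prop)

lemma lamT_apply {s : Set ℝ} (hs : MeasurableSet s) :
    lamT s = (g.prod g) {q : ℝ × ℝ | q.1 - q.2 ∈ s} :=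
  Measure.map_apply (by fun_prop) hs

lemma lamT_Ioo_pos {a b : ℝ} (hab : a < b) : 0 < lamT (Set.Ioo a b) := by
  rw [lamT_apply measurableSet_Ioo]
  have hsub : Set.Ioo ((a+b)/2 - (b-a)/4) ((a+b)/2 + (b-a)/4) ×ˢ Set.Ioo (-((b-a)/4)) ((b-a)/4)
      ⊆ {q : ℝ × ℝ | q.1 - q.2 ∈ Set.Ioo a b} := by
    rintro ⟨x, y⟩ ⟨hx, hy⟩
    simp only [Set.mem_Ioo, Set.mem_setOf_eq] at *
    constructor <;> nlinarith [hx.1, hx.2, hy.1, hy.2]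
  refine lt_of_lt_of_le ?_ (measure_mono hsub)
  rw [Measure.prod_prod]
  exact ENNReal.mul_pos (g_Ioo_pos (by linarith)).ne' (g_Ioo_pos (by linarith)).ne'

lemma lamT_zero : lamT {(0:ℝ)} = 0 := by
  rw [lamT_apply (measurableSet_singleton 0)]
  have hset : {q : ℝ × ℝ | q.1 - q.2 ∈ ({0} : Set ℝ)} = {q : ℝ × ℝ | q.1 = q.2} := by
    ext q; simp [sub_eq_zero]
  rw [hset, Measure.prod_apply (measurableSet_eq_fun measurable_fst measurable_snd)]
  have : ∀ x : ℝ, (Prod.mk x ⁻¹' {q : ℝ × ℝ | q.1 = q.2}) = {x} := by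
    intro x; ext y; simp [eq_comm]
  simp only [this, g_singleton, lintegral_zero]

lemma lamT_neg : lamT.map (fun x : ℝ => -x) = lamT := by
  rw [lamT, Measure.map_map (by fun_prop) (by fun_prop)]
  have : ((fun x : ℝ => -x) ∘ fun q : ℝ × ℝ => q.1 - q.2)
      = (fun q : ℝ × ℝ => q.1 - q.2) ∘ Prod.swap := by
    ext q; simp [neg_sub]
  rw [this, ← Measure.map_map (by fun_prop) measurable_swap, Measure.prod_swap]

lemma lamT_Iio_eq (c : ℝ) : lamT (Set.Iio c) = lamT (Set.Ioi (-c)) := by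
  conv_lhs => rw [← lamT_neg]
  rw [Measure.map_apply (by fun_prop) measurableSet_Iio]
  congr 1
  ext x; simp [neg_lt]

lemma lamT_Ioi_eq (c : ℝ) : lamT (Set.Ioi c) = lamT (Set.Iio (-c)) := by
  rw [lamT_Iio_eq, neg_neg]

lemma lamT_Ioi_strict {a b : ℝ} (hab : a < b) : lamT (Set.Ioi b) < lamT (Set.Ioi a) := by
  have hsub : Set.Ioo a b ∪ Set.Ioi b ⊆ Set.Ioi a := by
    rintro x (hx | hx)
    · exact hx.1
    · exact lt_trans hab hx
  have hd : Disjoint (Set.Ioo a b) (Set.Ioi b) := by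
    rw [Set.disjoint_left]; rintro x hx hx'
    exact absurd hx.2 (not_lt.mpr hx'.le)
  have h1 : lamT (Set.Ioo a b) + lamT (Set.Ioi b) ≤ lamT (Set.Ioi a) := by
    rw [← measure_union hd measurableSet_Ioi]
    exact measure_mono hsub
  calc lamT (Set.Ioi b) < lamT (Set.Ioo a b) + lamT (Set.Ioi b) := by
        rw [add_comm]
        exact ENNReal.lt_add_right (measure_ne_top _ _) (lamT_Ioo_pos hab).ne'
    _ ≤ lamT (Set.Ioi a) := h1

lemma lamT_Iio_strict {a b : ℝ} (hab : a < b) : lamT (Set.Iio a) < lamT (Set.Iio b) := by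
  rw [lamT_Iio_eq a, lamT_Iio_eq b]
  exact lamT_Ioi_strict (by linarith)

/-- the law of the pair of differences is `lamT.prod lamT` -/
lemma Qmap :
    ((g.prod g).prod (g.prod g)).map
        (fun q : (ℝ × ℝ) × (ℝ × ℝ) => (q.1.1 - q.2.1, q.1.2 - q.2.2))
      = lamT.prod lamT := by
  symm
  apply Measure.prod_eq
  intro s t hs ht
  rw [Measure.map_apply (by fun_prop) (hs.prod ht)]
  have hpre : (fun q : (ℝ × ℝ) × (ℝ × ℝ) => (q.1.1 - q.2.1, q.1.2 - q.2.2)) ⁻¹' (s ×ˢ t)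
      = {q : (ℝ × ℝ) × (ℝ × ℝ) | q.1.1 - q.2.1 ∈ s ∧ q.1.2 - q.2.2 ∈ t} := rfl
  rw [hpre]
  have hmeas : MeasurableSet {q : (ℝ × ℝ) × (ℝ × ℝ) | q.1.1 - q.2.1 ∈ s ∧ q.1.2 - q.2.2 ∈ t} :=
    ((hs.preimage (by fun_prop)).inter (ht.preimage (by fun_prop)))
  rw [Measure.prod_apply hmeas]
  have hslice : ∀ z : ℝ × ℝ,
      (Prod.mk z ⁻¹' {q : (ℝ × ℝ) × (ℝ × ℝ) | q.1.1 - q.2.1 ∈ s ∧ q.1.2 - q.2.2 ∈ t})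
        = {w : ℝ | z.1 - w ∈ s} ×ˢ {w : ℝ | z.2 - w ∈ t} := by
    intro z; ext w; simp [Set.mem_prod]
  have hinner : ∀ z : ℝ × ℝ,
      (g.prod g) (Prod.mk z ⁻¹' {q : (ℝ × ℝ) × (ℝ × ℝ) | q.1.1 - q.2.1 ∈ s ∧ q.1.2 - q.2.2 ∈ t})
        = g {w : ℝ | z.1 - w ∈ s} * g {w : ℝ | z.2 - w ∈ t} := by
    intro z; rw [hslice z, Measure.prod_prod]
  simp only [hinner]
  have hfm : ∀ (u : Set ℝ), MeasurableSet u →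
      Measurable (fun a : ℝ => g {w : ℝ | a - w ∈ u}) := by
    intro u hu
    have : MeasurableSet {q : ℝ × ℝ | q.1 - q.2 ∈ u} := hu.preimage (by fun_prop)
    exact measurable_measure_prodMk_left this
  rw [lintegral_prod_mul ((hfm s hs).aemeasurable) ((hfm t ht).aemeasurable)]
  have hint : ∀ (u : Set ℝ), MeasurableSet u →
      ∫⁻ a, g {w : ℝ | a - w ∈ u} ∂g = lamT u := by
    intro u hu
    rw [lamT_apply hu]
    have hmu : MeasurableSet {q : ℝ × ℝ | q.1 - q.2 ∈ u} := hu.preimage (by fun_prop)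
    rw [Measure.prod_apply hmu]
    rfl
  rw [hint s hs, hint t ht]

lemma slice_plus {ρ s d : ℝ} (hs : 0 < s) (hd : 0 < d) :
    {e : ℝ | 0 < d * (ρ * d + s * e)} = Set.Ioi (-(ρ * d) / s) := by
  ext e
  simp only [Set.mem_setOf_eq, Set.mem_Ioi, div_lt_iff₀ hs]
  constructor
  · intro h
    rcases mul_pos_iff.mp h with ⟨_, hX⟩ | ⟨hd', _⟩
    · nlinarith
    · linarith
  · intro h
    have hX : 0 < ρ * d + s * e := by nlinarith
    exact mul_pos hd hX

lemma slice_minus {ρ s d : ℝ} (hs : 0 < s) (hd : 0 < d) :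
    {e : ℝ | d * (ρ * d + s * e) < 0} = Set.Iio (-(ρ * d) / s) := by
  ext e
  simp only [Set.mem_setOf_eq, Set.mem_Iio, lt_div_iff₀ hs]
  constructor
  · intro h
    rcases mul_neg_iff.mp h with ⟨_, hX⟩ | ⟨hd', _⟩
    · nlinarith
    · linarith
  · intro h
    have hX : ρ * d + s * e < 0 := by nlinarith
    exact mul_neg_of_pos_of_neg hd hX

lemma slice_plus' {ρ s d : ℝ} (hs : 0 < s) (hd : d < 0) :
    {e : ℝ | 0 < d * (ρ * d + s * e)} = Set.Iio (-(ρ * d) / s) := by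
  ext e
  simp only [Set.mem_setOf_eq, Set.mem_Iio, lt_div_iff₀ hs]
  constructor
  · intro h
    rcases mul_pos_iff.mp h with ⟨hd', _⟩ | ⟨_, hX⟩
    · linarith
    · nlinarith
  · intro h
    have hX : ρ * d + s * e < 0 := by nlinarith
    exact mul_pos_of_neg_of_neg hd hX

lemma slice_minus' {ρ s d : ℝ} (hs : 0 < s) (hd : d < 0) :
    {e : ℝ | d * (ρ * d + s * e) < 0} = Set.Ioi (-(ρ * d) / s) := by
  ext e
  simp only [Set.mem_setOf_eq, Set.mem_Ioi, div_lt_iff₀ hs]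
  constructor
  · intro h
    rcases mul_neg_iff.mp h with ⟨hd', _⟩ | ⟨_, hX⟩
    · linarith
    · nlinarith
  · intro h
    have hX : 0 < ρ * d + s * e := by nlinarith
    exact mul_neg_of_neg_of_pos hd hX

lemma key_lt {ρ : ℝ} (hρ : 0 < ρ) (hρ1 : ρ < 1) :
    (lamT.prod lamT) {q : ℝ × ℝ | q.1 * (ρ * q.1 + Real.sqrt (1 - ρ ^ 2) * q.2) < 0}
      < (lamT.prod lamT) {q : ℝ × ℝ | 0 < q.1 * (ρ * q.1 + Real.sqrt (1 - ρ ^ 2) * q.2)} := by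
  set s := Real.sqrt (1 - ρ ^ 2) with hsdef
  have hs : 0 < s := Real.sqrt_pos.mpr (by nlinarith)
  have hmA : MeasurableSet {q : ℝ × ℝ | 0 < q.1 * (ρ * q.1 + s * q.2)} :=
    measurableSet_lt measurable_const (by fun_prop)
  have hmB : MeasurableSet {q : ℝ × ℝ | q.1 * (ρ * q.1 + s * q.2) < 0} :=
    measurableSet_lt (by fun_prop) measurable_const
  have hfi : (∫⁻ d, lamT (Prod.mk d ⁻¹' {q : ℝ × ℝ | q.1 * (ρ * q.1 + s * q.2) < 0}) ∂lamT) ≠ ⊤ := by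
    rw [← Measure.prod_apply hmB]
    exact measure_ne_top _ _
  rw [Measure.prod_apply hmA, Measure.prod_apply hmB]
  refine lintegral_strict_mono (IsProbabilityMeasure.ne_zero lamT)
    ((measurable_measure_prodMk_left hmA).aemeasurable) hfi ?_
  have h0 : ∀ᵐ d ∂lamT, d ≠ 0 := by
    rw [ae_iff]
    simpa using lamT_zero
  filter_upwards [h0] with d hd
  have hsliceA : (Prod.mk d ⁻¹' {q : ℝ × ℝ | 0 < q.1 * (ρ * q.1 + s * q.2)})
      = {e : ℝ | 0 < d * (ρ * d + s * e)} := rfl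
  have hsliceB : (Prod.mk d ⁻¹' {q : ℝ × ℝ | q.1 * (ρ * q.1 + s * q.2) < 0})
      = {e : ℝ | d * (ρ * d + s * e) < 0} := rfl
  rw [hsliceA, hsliceB]
  rcases lt_or_gt_of_ne hd with hneg | hpos
  · rw [slice_plus' hs hneg, slice_minus' hs hneg]
    rw [lamT_Ioi_eq]
    have hc : 0 < -(ρ * d) / s := div_pos (by nlinarith) hs
    exact lamT_Iio_strict (by linarith)
  · rw [slice_plus hs hpos, slice_minus hs hpos]
    rw [lamT_Iio_eq]
    have hc : -(ρ * d) / s < 0 := by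
      apply div_neg_of_neg_of_pos _ hs
      nlinarith
    exact lamT_Ioi_strict (by linarith)

lemma measurable_stdNormalCDF : Measurable stdNormalCDF := (monotone_cdf _).measurable

lemma strictMono_stdNormalCDF : StrictMono stdNormalCDF := by
  intro a b hab
  unfold stdNormalCDF
  rw [cdf_eq_real, cdf_eq_real, measureReal_def, measureReal_def]
  apply ENNReal.toReal_strict_mono (measure_ne_top _ _)
  have hsplit : Set.Iic b = Set.Iic a ∪ Set.Ioc a b := (Set.Iic_union_Ioc_eq_Iic hab.le).symm
  rw [hsplit, measure_union (Set.Iic_disjoint_Ioc le_rfl) measurableSet_Ioc]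
  have hpos : 0 < gaussianReal 0 1 (Set.Ioc a b) :=
    lt_of_lt_of_le (g_Ioo_pos hab) (measure_mono Set.Ioo_subset_Ioc_self)
  exact ENNReal.lt_add_right (measure_ne_top _ _) hpos.ne'

instance biGauss_prob (ρ : ℝ) : IsProbabilityMeasure (biGauss ρ) := by
  unfold biGauss; exact Measure.isProbabilityMeasure_map (by fun_prop)

instance gaussCopula_prob (ρ : ℝ) : IsProbabilityMeasure (gaussCopula ρ) := by
  unfold gaussCopula
  exact Measure.isProbabilityMeasure_map
    ((measurable_stdNormalCDF.comp measurable_fst).prod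
      (measurable_stdNormalCDF.comp measurable_snd)).aemeasurable

lemma biGauss_prod_apply (ρ : ℝ) (V : Set ℝ) (hV : MeasurableSet V) :
    ((biGauss ρ).prod (biGauss ρ))
        {q : (ℝ × ℝ) × (ℝ × ℝ) | (q.1.1 - q.2.1) * (q.1.2 - q.2.2) ∈ V}
      = (lamT.prod lamT) {p : ℝ × ℝ | p.1 * (ρ * p.1 + Real.sqrt (1 - ρ ^ 2) * p.2) ∈ V} := by
  set s := Real.sqrt (1 - ρ ^ 2) with hsdef
  set ψ : ℝ × ℝ → ℝ × ℝ := fun z => (z.1, ρ * z.1 + s * z.2) with hψdef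
  have hψ : Measurable ψ := by fun_prop
  have hS : MeasurableSet {q : (ℝ × ℝ) × (ℝ × ℝ) | (q.1.1 - q.2.1) * (q.1.2 - q.2.2) ∈ V} :=
    hV.preimage (by fun_prop)
  have hU : MeasurableSet {p : ℝ × ℝ | p.1 * (ρ * p.1 + s * p.2) ∈ V} :=
    hV.preimage (by fun_prop)
  have hbi : biGauss ρ = (g.prod g).map ψ := rfl
  rw [hbi, Measure.map_prod_map _ _ hψ hψ, Measure.map_apply (hψ.prodMap hψ) hS]
  have hsets : (Prod.map ψ ψ) ⁻¹' {q : (ℝ × ℝ) × (ℝ × ℝ) | (q.1.1 - q.2.1) * (q.1.2 - q.2.2) ∈ V}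
      = (fun q : (ℝ × ℝ) × (ℝ × ℝ) => (q.1.1 - q.2.1, q.1.2 - q.2.2)) ⁻¹'
          {p : ℝ × ℝ | p.1 * (ρ * p.1 + s * p.2) ∈ V} := by
    ext q
    simp only [Set.mem_preimage, Set.mem_setOf_eq, Prod.map, hψdef]
    rw [show (q.1.1 - q.2.1) * (ρ * q.1.1 + s * q.1.2 - (ρ * q.2.1 + s * q.2.2))
        = (q.1.1 - q.2.1) * (ρ * (q.1.1 - q.2.1) + s * (q.1.2 - q.2.2)) from by ring]
  rw [hsets, ← Measure.map_apply (by fun_prop) hU, Qmap]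

lemma ktau2_gaussCopula_eq (ρ : ℝ) : ktau2 (gaussCopula ρ) = ktau2 (biGauss ρ) := by
  have hΦm : Measurable (fun z : ℝ × ℝ => (stdNormalCDF z.1, stdNormalCDF z.2)) :=
    (measurable_stdNormalCDF.comp measurable_fst).prod
      (measurable_stdNormalCDF.comp measurable_snd)
  have hmono := strictMono_stdNormalCDF
  have key : ∀ (W : Set ℝ), MeasurableSet W →
      ((∀ a b c d : ℝ, ((stdNormalCDF a - stdNormalCDF b) * (stdNormalCDF c - stdNormalCDF d) ∈ W
          ↔ (a - b) * (c - d) ∈ W))) →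
      ((gaussCopula ρ).prod (gaussCopula ρ))
          {q : (ℝ × ℝ) × (ℝ × ℝ) | (q.1.1 - q.2.1) * (q.1.2 - q.2.2) ∈ W}
        = ((biGauss ρ).prod (biGauss ρ))
          {q : (ℝ × ℝ) × (ℝ × ℝ) | (q.1.1 - q.2.1) * (q.1.2 - q.2.2) ∈ W} := by
    intro W hW hiff
    have hSW : MeasurableSet {q : (ℝ × ℝ) × (ℝ × ℝ) | (q.1.1 - q.2.1) * (q.1.2 - q.2.2) ∈ W} :=
      hW.preimage (by fun_prop)
    rw [gaussCopula, Measure.map_prod_map _ _ hΦm hΦm,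
      Measure.map_apply (hΦm.prodMap hΦm) hSW]
    congr 1
    ext q
    simp only [Set.mem_preimage, Set.mem_setOf_eq, Prod.map]
    exact hiff _ _ _ _
  have hiff1 : ∀ a b c d : ℝ,
      ((stdNormalCDF a - stdNormalCDF b) * (stdNormalCDF c - stdNormalCDF d) ∈ Set.Ioi (0:ℝ)
        ↔ (a - b) * (c - d) ∈ Set.Ioi (0:ℝ)) := by
    intro a b c d
    simp only [Set.mem_Ioi]
    rw [mul_pos_iff, mul_pos_iff, sub_pos, sub_pos, sub_pos, sub_pos,
      sub_neg, sub_neg, sub_neg, sub_neg,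
      hmono.lt_iff_lt, hmono.lt_iff_lt, hmono.lt_iff_lt, hmono.lt_iff_lt]
  have hiff2 : ∀ a b c d : ℝ,
      ((stdNormalCDF a - stdNormalCDF b) * (stdNormalCDF c - stdNormalCDF d) ∈ Set.Iio (0:ℝ)
        ↔ (a - b) * (c - d) ∈ Set.Iio (0:ℝ)) := by
    intro a b c d
    simp only [Set.mem_Iio]
    rw [mul_neg_iff, mul_neg_iff, sub_pos, sub_pos, sub_pos, sub_pos,
      sub_neg, sub_neg, sub_neg, sub_neg,
      hmono.lt_iff_lt, hmono.lt_iff_lt, hmono.lt_iff_lt, hmono.lt_iff_lt]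
  unfold ktau2
  rw [show {q : (ℝ × ℝ) × (ℝ × ℝ) | 0 < (q.1.1 - q.2.1) * (q.1.2 - q.2.2)}
      = {q : (ℝ × ℝ) × (ℝ × ℝ) | (q.1.1 - q.2.1) * (q.1.2 - q.2.2) ∈ Set.Ioi (0:ℝ)} from rfl,
    show {q : (ℝ × ℝ) × (ℝ × ℝ) | (q.1.1 - q.2.1) * (q.1.2 - q.2.2) < 0}
      = {q : (ℝ × ℝ) × (ℝ × ℝ) | (q.1.1 - q.2.1) * (q.1.2 - q.2.2) ∈ Set.Iio (0:ℝ)} from rfl,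
    key _ measurableSet_Ioi hiff1, key _ measurableSet_Iio hiff2]

lemma ktau2_biGauss_pos : 0 < ktau2 (biGauss (1/2 : ℝ)) := by
  unfold ktau2
  rw [show {q : (ℝ × ℝ) × (ℝ × ℝ) | 0 < (q.1.1 - q.2.1) * (q.1.2 - q.2.2)}
      = {q : (ℝ × ℝ) × (ℝ × ℝ) | (q.1.1 - q.2.1) * (q.1.2 - q.2.2) ∈ Set.Ioi (0:ℝ)} from rfl,
    show {q : (ℝ × ℝ) × (ℝ × ℝ) | (q.1.1 - q.2.1) * (q.1.2 - q.2.2) < 0}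
      = {q : (ℝ × ℝ) × (ℝ × ℝ) | (q.1.1 - q.2.1) * (q.1.2 - q.2.2) ∈ Set.Iio (0:ℝ)} from rfl,
    biGauss_prod_apply _ _ measurableSet_Ioi, biGauss_prod_apply _ _ measurableSet_Iio]
  rw [sub_pos]
  have := key_lt (ρ := 1/2) (by norm_num) (by norm_num)
  exact ENNReal.toReal_strict_mono (measure_ne_top _ _) this

lemma ktau2_biGauss_neg : ktau2 (biGauss (-(1/2) : ℝ)) < 0 := by
  unfold ktau2
  rw [show {q : (ℝ × ℝ) × (ℝ × ℝ) | 0 < (q.1.1 - q.2.1) * (q.1.2 - q.2.2)}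
      = {q : (ℝ × ℝ) × (ℝ × ℝ) | (q.1.1 - q.2.1) * (q.1.2 - q.2.2) ∈ Set.Ioi (0:ℝ)} from rfl,
    show {q : (ℝ × ℝ) × (ℝ × ℝ) | (q.1.1 - q.2.1) * (q.1.2 - q.2.2) < 0}
      = {q : (ℝ × ℝ) × (ℝ × ℝ) | (q.1.1 - q.2.1) * (q.1.2 - q.2.2) ∈ Set.Iio (0:ℝ)} from rfl,
    biGauss_prod_apply _ _ measurableSet_Ioi, biGauss_prod_apply _ _ measurableSet_Iio]
  have hsq : (1 : ℝ) - (-(1/2)) ^ 2 = 1 - (1/2 : ℝ) ^ 2 := by norm_num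
  rw [hsq]
  have hpres : (lamT.prod lamT).map (Prod.map (id : ℝ → ℝ) (fun x : ℝ => -x))
      = lamT.prod lamT := by
    rw [← Measure.map_prod_map _ _ measurable_id (by fun_prop), Measure.map_id, lamT_neg]
  set s := Real.sqrt (1 - (1/2 : ℝ) ^ 2) with hsdef
  have hflip : ∀ (V : Set ℝ), MeasurableSet V →
      (lamT.prod lamT) {p : ℝ × ℝ | p.1 * (-(1/2) * p.1 + s * p.2) ∈ V}
        = (lamT.prod lamT) {p : ℝ × ℝ | -(p.1 * ((1/2) * p.1 + s * p.2)) ∈ V} := by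
    intro V hV
    have hU : MeasurableSet {p : ℝ × ℝ | p.1 * (-(1/2) * p.1 + s * p.2) ∈ V} :=
      hV.preimage (by fun_prop)
    conv_lhs => rw [← hpres]
    rw [Measure.map_apply ((measurable_id.prodMap (by fun_prop))) hU]
    congr 1
    ext p
    simp only [Set.mem_preimage, Set.mem_setOf_eq, Prod.map, id]
    rw [show p.1 * (-(1/2) * p.1 + s * -p.2) = -(p.1 * ((1/2) * p.1 + s * p.2)) from by ring]
  rw [hflip _ measurableSet_Ioi, hflip _ measurableSet_Iio]
  have hplus : {p : ℝ × ℝ | -(p.1 * ((1/2) * p.1 + s * p.2)) ∈ Set.Ioi (0:ℝ)}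
      = {p : ℝ × ℝ | p.1 * ((1/2 : ℝ) * p.1 + s * p.2) ∈ Set.Iio (0:ℝ)} := by
    ext p; simp [neg_pos]
  have hminus : {p : ℝ × ℝ | -(p.1 * ((1/2) * p.1 + s * p.2)) ∈ Set.Iio (0:ℝ)}
      = {p : ℝ × ℝ | p.1 * ((1/2 : ℝ) * p.1 + s * p.2) ∈ Set.Ioi (0:ℝ)} := by
    ext p; simp [neg_lt, neg_neg]
  rw [hplus, hminus, sub_neg]
  have := key_lt (ρ := 1/2) (by norm_num) (by norm_num)
  exact ENNReal.toReal_strict_mono (measure_ne_top _ _) this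

lemma ktau2_gc_pos : 0 < ktau2 (gaussCopula (1/2 : ℝ)) := by
  rw [ktau2_gaussCopula_eq]; exact ktau2_biGauss_pos

lemma ktau2_gc_neg : ktau2 (gaussCopula (-(1/2) : ℝ)) < 0 := by
  rw [ktau2_gaussCopula_eq]; exact ktau2_biGauss_neg

/-! ### Construction of the trivariate law -/

instance unif_prob : IsProbabilityMeasure (unif 0 4) := by
  unfold unif
  apply cond_isProbabilityMeasure_of_finite
  · rw [Real.volume_Icc]; norm_num
  · rw [Real.volume_Icc]; norm_num

lemma unif_val {C : Set ℝ} (hC : C ⊆ Set.Icc 0 4) :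
    unif 0 4 C = (4 : ENNReal)⁻¹ * volume C := by
  unfold unif
  rw [cond_apply measurableSet_Icc, Set.inter_eq_right.2 hC, Real.volume_Icc]
  norm_num

def SS : Set ℝ := Set.Ioc 1 2 ∪ Set.Ioc 3 4

lemma hSS : MeasurableSet SS := measurableSet_Ioc.union measurableSet_Ioc

def kap : Kernel ℝ (ℝ × ℝ) :=
  Kernel.piecewise hSS (Kernel.const _ (gaussCopula (-(1/2))))
    (Kernel.const _ (gaussCopula (1/2)))

instance kap_markov : IsMarkovKernel kap := by
  unfold kap; infer_instance

lemma kap_pos : ∀ x ∈ Set.Icc (0:ℝ) 1 ∪ Set.Ioc (2:ℝ) 3, kap x = gaussCopula (1/2) := by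
  intro x hx
  have hxS : x ∉ SS := by
    rcases hx with hx | hx <;> rcases hx with ⟨h1, h2⟩ <;>
      · rintro (⟨h3, h4⟩ | ⟨h3, h4⟩) <;> linarith
  rw [kap, Kernel.piecewise_apply, if_neg hxS, Kernel.const_apply]

lemma kap_neg : ∀ x ∈ Set.Ioc (1:ℝ) 2 ∪ Set.Ioc (3:ℝ) 4, kap x = gaussCopula (-(1/2)) := by
  intro x hx
  rw [kap, Kernel.piecewise_apply, if_pos (show x ∈ SS from hx), Kernel.const_apply]

def P0 : Measure (ℝ × ℝ × ℝ) :=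
  ((unif 0 4) ⊗ₘ kap).map (fun q : ℝ × (ℝ × ℝ) => (q.2.1, q.2.2, q.1))

lemma hT0 : Measurable (fun q : ℝ × (ℝ × ℝ) => (q.2.1, q.2.2, q.1)) := by fun_prop

instance P0_prob : IsProbabilityMeasure P0 := by
  unfold P0; exact Measure.isProbabilityMeasure_map hT0.aemeasurable

lemma P0_marginal : P0.map (fun z : ℝ × ℝ × ℝ => z.2.2) = unif 0 4 := by
  unfold P0
  rw [Measure.map_map (by fun_prop) hT0]
  have : ((fun z : ℝ × ℝ × ℝ => z.2.2) ∘ fun q : ℝ × (ℝ × ℝ) => (q.2.1, q.2.2, q.1))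
      = Prod.fst := rfl
  rw [this, ← Measure.fst, Measure.fst_compProd]

lemma P0_cond (B : Set (ℝ × ℝ)) (C : Set ℝ) (hB : MeasurableSet B) (hC : MeasurableSet C) :
    P0 {z : ℝ × ℝ × ℝ | (z.1, z.2.1) ∈ B ∧ z.2.2 ∈ C} = ∫⁻ x in C, kap x B ∂(unif 0 4) := by
  unfold P0
  have hset : MeasurableSet {z : ℝ × ℝ × ℝ | (z.1, z.2.1) ∈ B ∧ z.2.2 ∈ C} :=
    (hB.preimage (by fun_prop)).inter (hC.preimage (by fun_prop))
  rw [Measure.map_apply hT0 hset]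
  have hpre : (fun q : ℝ × (ℝ × ℝ) => (q.2.1, q.2.2, q.1)) ⁻¹'
      {z : ℝ × ℝ × ℝ | (z.1, z.2.1) ∈ B ∧ z.2.2 ∈ C} = C ×ˢ B := by
    ext q
    simp only [Set.mem_preimage, Set.mem_setOf_eq, Set.mem_prod, Prod.mk.eta]
    exact and_comm
  rw [hpre, Measure.compProd_apply_prod hC hB]

lemma P0_E (C : Set ℝ) (hC : MeasurableSet C) :
    P0 {z : ℝ × ℝ × ℝ | z.2.2 ∈ C} = unif 0 4 C := by
  have : {z : ℝ × ℝ × ℝ | z.2.2 ∈ C}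
      = {z : ℝ × ℝ × ℝ | (z.1, z.2.1) ∈ (Set.univ : Set (ℝ × ℝ)) ∧ z.2.2 ∈ C} := by
    ext z; simp
  rw [this, P0_cond _ _ MeasurableSet.univ hC]
  simp [measure_univ]

def mixG : Measure (ℝ × ℝ) :=
  (1 / 2 : ENNReal) • gaussCopula (1 / 2) + (1 / 2 : ENNReal) • gaussCopula (-(1 / 2))

instance mixG_prob : IsProbabilityMeasure mixG := by
  constructor
  simp only [mixG, Measure.add_apply, Measure.smul_apply, measure_univ, smul_eq_mul, mul_one]
  rw [one_div, ENNReal.inv_two_add_inv_two]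

lemma two_mul_quarter : (2 : ENNReal) * 4⁻¹ = 2⁻¹ := by
  rw [show (4 : ENNReal) = 2 * 2 from by norm_num,
    ENNReal.mul_inv (Or.inl two_ne_zero) (Or.inl ENNReal.ofNat_ne_top), ← mul_assoc,
    ENNReal.mul_inv_cancel two_ne_zero ENNReal.ofNat_ne_top, one_mul]

lemma cond_map_eq (C₁ C₂ : Set ℝ) (h₁ : MeasurableSet C₁) (h₂ : MeasurableSet C₂)
    (hd : Disjoint C₁ C₂) (hsub : C₁ ∪ C₂ ⊆ Set.Icc 0 4)
    (hκ₁ : ∀ x ∈ C₁, kap x = gaussCopula (1/2))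
    (hκ₂ : ∀ x ∈ C₂, kap x = gaussCopula (-(1/2)))
    (hv₁ : volume C₁ = 1) (hv₂ : volume C₂ = 1) :
    P0 {z : ℝ × ℝ × ℝ | z.2.2 ∈ C₁ ∪ C₂} = 2⁻¹ ∧
    (P0[|{z : ℝ × ℝ × ℝ | z.2.2 ∈ C₁ ∪ C₂}]).map (fun z : ℝ × ℝ × ℝ => (z.1, z.2.1)) = mixG := by
  have hCm : MeasurableSet (C₁ ∪ C₂) := h₁.union h₂
  have hE : MeasurableSet {z : ℝ × ℝ × ℝ | z.2.2 ∈ C₁ ∪ C₂} := hCm.preimage (by fun_prop)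
  have hPE : P0 {z : ℝ × ℝ × ℝ | z.2.2 ∈ C₁ ∪ C₂} = 2⁻¹ := by
    rw [P0_E _ hCm, unif_val hsub, measure_union hd h₂, hv₁, hv₂]
    rw [show (1 : ENNReal) + 1 = 2 from by norm_num, mul_comm, two_mul_quarter]
  refine ⟨hPE, ?_⟩
  ext B hB
  rw [Measure.map_apply (by fun_prop) hB, cond_apply hE]
  have hint : {z : ℝ × ℝ × ℝ | z.2.2 ∈ C₁ ∪ C₂} ∩ ((fun z : ℝ × ℝ × ℝ => (z.1, z.2.1)) ⁻¹' B)
      = {z : ℝ × ℝ × ℝ | (z.1, z.2.1) ∈ B ∧ z.2.2 ∈ C₁ ∪ C₂} := by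
    ext z
    simp only [Set.mem_inter_iff, Set.mem_setOf_eq, Set.mem_preimage]
    exact and_comm
  rw [hint, P0_cond _ _ hB hCm, hPE]
  rw [lintegral_union h₂ hd]
  have e₁ : ∫⁻ x in C₁, kap x B ∂(unif 0 4) = gaussCopula (1/2) B * (4 : ENNReal)⁻¹ := by
    rw [setLIntegral_congr_fun_ae h₁ (ae_of_all _ (fun x hx => by rw [hκ₁ x hx])),
      setLIntegral_const, unif_val (fun x hx => hsub (Set.mem_union_left _ hx)), hv₁, mul_one]
  have e₂ : ∫⁻ x in C₂, kap x B ∂(unif 0 4) = gaussCopula (-(1/2)) B * (4 : ENNReal)⁻¹ := by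
    rw [setLIntegral_congr_fun_ae h₂ (ae_of_all _ (fun x hx => by rw [hκ₂ x hx])),
      setLIntegral_const, unif_val (fun x hx => hsub (Set.mem_union_right _ hx)), hv₂, mul_one]
  rw [e₁, e₂]
  have hmix : mixG B = 2⁻¹ * gaussCopula (1/2) B + 2⁻¹ * gaussCopula (-(1/2)) B := by
    simp [mixG, Measure.add_apply, Measure.smul_apply, smul_eq_mul, one_div]
  rw [hmix, inv_inv, mul_add, mul_comm (gaussCopula (1/2) B) _,
    mul_comm (gaussCopula (-(1/2)) B) _, ← mul_assoc, ← mul_assoc, two_mul_quarter]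

lemma smul_prod_apply (c : ENNReal) (m : Measure (ℝ × ℝ)) [SFinite m]
    {T : Set ((ℝ × ℝ) × (ℝ × ℝ))} (hT : MeasurableSet T) :
    ((c • m).prod (c • m)) T = c * (c * (m.prod m) T) := by
  rw [Measure.prod_apply hT, Measure.prod_apply hT, lintegral_smul_measure]
  congr 1
  rw [← lintegral_const_mul c (measurable_measure_prodMk_left hT)]
  simp [Measure.smul_apply]

lemma sCKT_eq (A : Set ℝ) (hA : MeasurableSet A)
    (hPE : P0 {z : ℝ × ℝ × ℝ | z.2.2 ∈ A} = 2⁻¹)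
    (hmap : (P0[|{z : ℝ × ℝ × ℝ | z.2.2 ∈ A}]).map (fun z : ℝ × ℝ × ℝ => (z.1, z.2.1)) = mixG) :
    sCKT P0 A =
      ((mixG.prod mixG) {q : (ℝ × ℝ) × (ℝ × ℝ) | 0 < (q.1.1 - q.2.1) * (q.1.2 - q.2.2)}).toReal -
      ((mixG.prod mixG) {q : (ℝ × ℝ) × (ℝ × ℝ) | (q.1.1 - q.2.1) * (q.1.2 - q.2.2) < 0}).toReal := by
  set E : Set (ℝ × ℝ × ℝ) := {z | z.2.2 ∈ A} with hEdef
  have hE : MeasurableSet E := hA.preimage (by fun_prop)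
  have hf12 : Measurable (fun z : ℝ × ℝ × ℝ => (z.1, z.2.1)) := by fun_prop
  set R : Measure (ℝ × ℝ) := (P0.restrict E).map (fun z : ℝ × ℝ × ℝ => (z.1, z.2.1)) with hRdef
  have hR : R = (2⁻¹ : ENNReal) • mixG := by
    rw [← hmap]
    rw [ProbabilityTheory.cond, Measure.map_smul, hPE, inv_inv (2 : ENNReal), hRdef, smul_smul,
      show (2:ENNReal)⁻¹ * 2 = 1 from ENNReal.inv_mul_cancel two_ne_zero ENNReal.ofNat_ne_top,
      one_smul]
  have hWE : {q : (ℝ × ℝ × ℝ) × (ℝ × ℝ × ℝ) | q.1.2.2 ∈ A ∧ q.2.2.2 ∈ A} = E ×ˢ E := rfl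
  have hmain : ∀ (T : Set ((ℝ × ℝ) × (ℝ × ℝ))), MeasurableSet T →
      ((P0.prod P0)[|E ×ˢ E])
          ((Prod.map (fun z : ℝ × ℝ × ℝ => (z.1, z.2.1)) (fun z : ℝ × ℝ × ℝ => (z.1, z.2.1))) ⁻¹' T)
        = (mixG.prod mixG) T := by
    intro T hT
    have hS : MeasurableSet ((Prod.map (fun z : ℝ × ℝ × ℝ => (z.1, z.2.1))
        (fun z : ℝ × ℝ × ℝ => (z.1, z.2.1))) ⁻¹' T) := hT.preimage (hf12.prodMap hf12)
    rw [cond_apply (hE.prod hE)]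
    have h1 : (P0.prod P0) (E ×ˢ E) = 2⁻¹ * 2⁻¹ := by
      rw [Measure.prod_prod, hPE]
    have h2 : (P0.prod P0) (E ×ˢ E ∩ (Prod.map (fun z : ℝ × ℝ × ℝ => (z.1, z.2.1))
        (fun z : ℝ × ℝ × ℝ => (z.1, z.2.1))) ⁻¹' T) = ((P0.restrict E).prod (P0.restrict E))
        ((Prod.map (fun z : ℝ × ℝ × ℝ => (z.1, z.2.1)) (fun z : ℝ × ℝ × ℝ => (z.1, z.2.1))) ⁻¹' T) := by
      rw [Measure.prod_restrict, Measure.restrict_apply hS, Set.inter_comm]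
    rw [h1, h2, ← Measure.map_apply (hf12.prodMap hf12) hT,
      ← Measure.map_prod_map _ _ hf12 hf12, ← hRdef, hR, smul_prod_apply _ _ hT,
      ← mul_assoc, ← mul_assoc,
      show ((2:ENNReal)⁻¹ * 2⁻¹)⁻¹ * 2⁻¹ * 2⁻¹ = 1 from by
        rw [mul_assoc, ENNReal.inv_mul_cancel (by norm_num)
          (ENNReal.mul_ne_top (ENNReal.inv_ne_top.mpr two_ne_zero)
            (ENNReal.inv_ne_top.mpr two_ne_zero))], one_mul]
  unfold sCKT
  rw [hWE,
    show {q : (ℝ × ℝ × ℝ) × (ℝ × ℝ × ℝ) | 0 < (q.1.1 - q.2.1) * (q.1.2.1 - q.2.2.1)}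
      = (Prod.map (fun z : ℝ × ℝ × ℝ => (z.1, z.2.1)) (fun z : ℝ × ℝ × ℝ => (z.1, z.2.1))) ⁻¹'
        {q : (ℝ × ℝ) × (ℝ × ℝ) | 0 < (q.1.1 - q.2.1) * (q.1.2 - q.2.2)} from rfl,
    show {q : (ℝ × ℝ × ℝ) × (ℝ × ℝ × ℝ) | (q.1.1 - q.2.1) * (q.1.2.1 - q.2.2.1) < 0}
      = (Prod.map (fun z : ℝ × ℝ × ℝ => (z.1, z.2.1)) (fun z : ℝ × ℝ × ℝ => (z.1, z.2.1))) ⁻¹'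
        {q : (ℝ × ℝ) × (ℝ × ℝ) | (q.1.1 - q.2.1) * (q.1.2 - q.2.2) < 0} from rfl,
    hmain _ (measurableSet_lt measurable_const (by fun_prop)),
    hmain _ (measurableSet_lt (by fun_prop) measurable_const)]

end CExAux

open CExAux in

/-- **Second counter-example:** a trivariate random vector whose subset-conditional Kendall's
tau is constant over the partition `{[0,2], (2,4]}` (the two conditional laws of `(X₁,X₂)`
even coincide, both being the equal-weight mixture of the Gaussian copulas with correlations
`1/2` and `-1/2`), while its pointwise conditional Kendall's tau is not constant. -/
theorem stmt14 :
    ∃ (Ω : Type) (_ : MeasurableSpace Ω) (P : Measure Ω) (X : Ω → ℝ × ℝ × ℝ)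
      (κ : ProbabilityTheory.Kernel ℝ (ℝ × ℝ)),
      IsProbabilityMeasure P ∧ Measurable X ∧ IsMarkovKernel κ ∧
      -- `X₃` is uniform on `[0, 4]`
      P.map (fun ω => (X ω).2.2) = unif 0 4 ∧
      -- `κ` is a regular conditional distribution of `(X₁, X₂)` given `X₃`
      (∀ (B : Set (ℝ × ℝ)) (C : Set ℝ), MeasurableSet B → MeasurableSet C →
        (P.map X) {z : ℝ × ℝ × ℝ | (z.1, z.2.1) ∈ B ∧ z.2.2 ∈ C} =
          ∫⁻ x in C, κ x B ∂(unif 0 4)) ∧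
      -- the explicit conditional structure: Gaussian copulas with correlation `ρ(x) = ±1/2`
      (∀ x ∈ Set.Icc (0 : ℝ) 1 ∪ Set.Ioc (2 : ℝ) 3, κ x = gaussCopula (1 / 2)) ∧
      (∀ x ∈ Set.Ioc (1 : ℝ) 2 ∪ Set.Ioc (3 : ℝ) 4, κ x = gaussCopula (-(1 / 2))) ∧
      -- (i) the two subset-conditional laws of `(X₁, X₂)` coincide …
      ((P.map X)[|{z : ℝ × ℝ × ℝ | z.2.2 ∈ Set.Icc (0 : ℝ) 2}]).map
          (fun z => (z.1, z.2.1)) =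
        ((P.map X)[|{z : ℝ × ℝ × ℝ | z.2.2 ∈ Set.Ioc (2 : ℝ) 4}]).map
          (fun z => (z.1, z.2.1)) ∧
      -- … both being the equal-weight mixture of the two Gaussian copulas …
      ((P.map X)[|{z : ℝ × ℝ × ℝ | z.2.2 ∈ Set.Icc (0 : ℝ) 2}]).map
          (fun z => (z.1, z.2.1)) =
        (1 / 2 : ENNReal) • gaussCopula (1 / 2) + (1 / 2 : ENNReal) • gaussCopula (-(1 / 2)) ∧
      -- … so that in particular the subset-conditional Kendall's taus agree
      sCKT (P.map X) (Set.Icc 0 2) = sCKT (P.map X) (Set.Ioc 2 4) ∧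
      -- (ii) while the pointwise conditional Kendall's tau is not constant
      (∀ x ∈ Set.Icc (0 : ℝ) 1, 0 < ktau2 (κ x)) ∧
      (∀ x ∈ Set.Ioc (1 : ℝ) 2, ktau2 (κ x) < 0) ∧
      ∃ x ∈ Set.Icc (0 : ℝ) 4, ∃ y ∈ Set.Icc (0 : ℝ) 4, ktau2 (κ x) ≠ ktau2 (κ y) := by
  have hs1 : Set.Icc (0:ℝ) 2 = Set.Icc 0 1 ∪ Set.Ioc 1 2 :=
    (Set.Icc_union_Ioc_eq_Icc zero_le_one one_le_two).symm
  have hs2 : Set.Ioc (2:ℝ) 4 = Set.Ioc 2 3 ∪ Set.Ioc 3 4 :=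
    (Set.Ioc_union_Ioc_eq_Ioc (by norm_num) (by norm_num)).symm
  have h1 := cond_map_eq (Set.Icc 0 1) (Set.Ioc 1 2) measurableSet_Icc measurableSet_Ioc
    (by rw [Set.disjoint_left]; rintro x ⟨_, hx2⟩ ⟨hx3, _⟩; linarith)
    (by rw [← hs1]; exact Set.Icc_subset_Icc le_rfl (by norm_num))
    (fun x hx => kap_pos x (Set.mem_union_left _ hx))
    (fun x hx => kap_neg x (Set.mem_union_left _ hx))
    (by rw [Real.volume_Icc]; norm_num) (by rw [Real.volume_Ioc]; norm_num)
  have h2 := cond_map_eq (Set.Ioc 2 3) (Set.Ioc 3 4) measurableSet_Ioc measurableSet_Ioc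
    (by rw [Set.disjoint_left]; rintro x ⟨_, hx2⟩ ⟨hx3, _⟩; linarith)
    (by rw [← hs2]; exact Set.Ioc_subset_Icc_self.trans (Set.Icc_subset_Icc (by norm_num) le_rfl))
    (fun x hx => kap_pos x (Set.mem_union_right _ hx))
    (fun x hx => kap_neg x (Set.mem_union_right _ hx))
    (by rw [Real.volume_Ioc]; norm_num) (by rw [Real.volume_Ioc]; norm_num)
  rw [← hs1] at h1
  rw [← hs2] at h2
  refine ⟨ℝ × ℝ × ℝ, inferInstance, P0, id, kap, inferInstance, measurable_id, inferInstance,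
    P0_marginal, ?_, kap_pos, kap_neg, ?_, ?_, ?_, ?_, ?_, ?_⟩
  · intro B C hB hC
    rw [Measure.map_id]
    exact P0_cond B C hB hC
  · rw [Measure.map_id, h1.2, h2.2]
  · rw [Measure.map_id]
    exact h1.2
  · rw [Measure.map_id, sCKT_eq _ measurableSet_Icc h1.1 h1.2,
      sCKT_eq _ measurableSet_Ioc h2.1 h2.2]
  · intro x hx
    rw [kap_pos x (Set.mem_union_left _ hx)]
    exact ktau2_gc_pos
  · intro x hx
    rw [kap_neg x (Set.mem_union_left _ hx)]
    exact ktau2_gc_neg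
  · refine ⟨0, by norm_num, 2, by norm_num, ?_⟩
    have hx0 : kap (0:ℝ) = gaussCopula (1/2) :=
      kap_pos 0 (Set.mem_union_left _ (by norm_num))
    have hx2 : kap (2:ℝ) = gaussCopula (-(1/2)) :=
      kap_neg 2 (Set.mem_union_left _ (by norm_num))
    rw [hx0, hx2]
    exact (lt_trans ktau2_gc_neg ktau2_gc_pos).ne'
end
end
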